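/- arXiv:1507.07600 — 5 statements merged into one kernel-verified Lean document; each statement's English description precedes it below -/
import Mathlib

section
/- (Rosenthal-type maximal inequality, classical case.) Let X₁,…,Xₙ be independent real random variables on a probability space with E[Xₖ] = 0 and E[|Xₖ|^p] < ∞ for some p ≥ 2, and let Sₖ = X₁ + ⋯ + Xₖ. Then there is a constant C_p depending only on p such that E[max_{k≤n} |Sₖ|^p] ≤ C_p ( Σ_{k=1}^n E[|Xₖ|^p] + ( Σ_{k=1}^n E[Xₖ²] )^{p/2} ). -/
open MeasureTheory ProbabilityTheory Finset
open Set

namespace RosenthalAux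

variable {Ω : Type} [MeasurableSpace Ω] {μ : Measure Ω} {X : ℕ → Ω → ℝ}

lemma integrable_mul_L2 {f g : Ω → ℝ} (hf : MemLp f 2 μ) (hg : MemLp g 2 μ) :
    Integrable (fun ω => f ω * g ω) μ := by
  refine Integrable.mono' ((hf.integrable_sq.add hg.integrable_sq).div_const 2)
    (hf.aestronglyMeasurable.mul hg.aestronglyMeasurable) ?_
  filter_upwards with ω
  have h1 : ‖f ω * g ω‖ = |f ω| * |g ω| := by rw [Real.norm_eq_abs, abs_mul]
  have h3 : |f ω| ^ 2 = f ω ^ 2 := sq_abs _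
  have h4 : |g ω| ^ 2 = g ω ^ 2 := sq_abs _
  rw [h1]
  simp only [Pi.add_apply]
  nlinarith [sq_nonneg (|f ω| - |g ω|)]

def mask (S : Finset ℕ) (X : ℕ → Ω → ℝ) (ω : Ω) : ℕ → ℝ := fun j => if j ∈ S then X j ω else 0

lemma measurable_maskExtend (S : Finset ℕ) :
    Measurable (fun (v : (i : S) → ℝ) (j : ℕ) => if h : j ∈ S then v ⟨j, h⟩ else 0) := by
  refine measurable_pi_lambda _ fun j => ?_
  by_cases h : j ∈ S
  · simp only [h, dif_pos]
    exact measurable_pi_apply _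
  · simp only [h, dif_neg, not_false_iff]
    exact measurable_const

lemma indepFun_mask (hX : ∀ i, Measurable (X i))
    (hind : iIndepFun X μ)
    {S T : Finset ℕ} (hST : Disjoint S T) :
    IndepFun (mask S X) (mask T X) μ := by
  have h := (hind.indepFun_finset S T hST hX).comp
    (measurable_maskExtend S) (measurable_maskExtend T)
  convert h using 1 <;> (funext ω j; simp [mask])

def psum (a i : ℕ) (u : ℕ → ℝ) : ℝ := ∑ j ∈ Finset.Ico a (a + i), u j

lemma measurable_psum (a i : ℕ) : Measurable (psum a i) :=
  Finset.measurable_sum _ fun j _ => measurable_pi_apply j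

omit [MeasurableSpace Ω] in
lemma psum_mask {b i : ℕ} {S : Finset ℕ} (h : Finset.Ico b (b + i) ⊆ S) (X : ℕ → Ω → ℝ) (ω : Ω) :
    psum b i (mask S X ω) = ∑ j ∈ Finset.Ico b (b + i), X j ω := by
  refine Finset.sum_congr rfl fun j hj => ?_
  simp only [mask, if_pos (h hj)]

variable [IsProbabilityMeasure μ]

lemma memLp_sum_fun {q : ENNReal} (hq : ∀ k, MemLp (X k) q μ) (s : Finset ℕ) :
    MemLp (fun ω => ∑ j ∈ s, X j ω) q μ := by
  have h := memLp_finset_sum' s fun j (_ : j ∈ s) => hq j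
  have he : (∑ i ∈ s, X i) = fun ω => ∑ j ∈ s, X j ω := by funext ω; simp
  rwa [he] at h

lemma integral_sq_sum (hind : iIndepFun X μ)
    (hL2 : ∀ k, MemLp (X k) 2 μ) (hcent : ∀ k, ∫ ω, X k ω ∂μ = 0) (s : Finset ℕ) :
    ∫ ω, (∑ j ∈ s, X j ω) ^ 2 ∂μ = ∑ j ∈ s, ∫ ω, X j ω ^ 2 ∂μ := by
  have expand : (fun ω => (∑ j ∈ s, X j ω) ^ 2) = fun ω => ∑ i ∈ s, ∑ j ∈ s, X i ω * X j ω := by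
    funext ω; rw [sq, Finset.sum_mul_sum]
  rw [expand, integral_finset_sum _ (fun i _ =>
    integrable_finset_sum _ fun j _ => integrable_mul_L2 (hL2 i) (hL2 j))]
  refine Finset.sum_congr rfl fun i hi => ?_
  rw [integral_finset_sum _ fun j _ => integrable_mul_L2 (hL2 i) (hL2 j)]
  rw [Finset.sum_eq_single_of_mem i hi]
  · simp only [← sq]
  · intro j hj hji
    have hIF : IndepFun (X i) (X j) μ := hind.indepFun (Ne.symm hji)
    have hm := IndepFun.integral_mul_eq_mul_integral hIF (hL2 i).aestronglyMeasurable (hL2 j).aestronglyMeasurable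
    have h0 : integral μ (X i * X j) = 0 := by rw [hm, hcent i, hcent j, zero_mul]
    exact h0

lemma kolmogorov (hX : ∀ i, Measurable (X i))
    (hind : iIndepFun X μ)
    (hL2 : ∀ k, MemLp (X k) 2 μ) (hcent : ∀ k, ∫ ω, X k ω ∂μ = 0)
    (a n : ℕ) {t : ℝ} (ht : 0 < t) :
    μ {ω | ∃ i ≤ n, t < |∑ j ∈ Finset.Ico a (a + i), X j ω|} ≤
      ENNReal.ofReal ((∑ j ∈ Finset.Ico a (a + n), ∫ ω, X j ω ^ 2 ∂μ) / t ^ 2) := by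
  classical
  set T : ℕ → Ω → ℝ := fun i ω => ∑ j ∈ Finset.Ico a (a + i), X j ω with hTdef
  have hTmeas : ∀ i, Measurable (T i) := fun i => Finset.measurable_sum _ fun j _ => hX j
  have hTL2 : ∀ i, MemLp (T i) 2 μ := fun i => memLp_sum_fun hL2 _
  set E : ℕ → Set Ω := fun k => {ω | (∀ i < k, |T i ω| ≤ t) ∧ t < |T k ω|} with hEdef
  have hEmeas : ∀ k, MeasurableSet (E k) := by
    intro k
    have h1 : E k = (⋂ i, ⋂ _ : i < k, {ω | |T i ω| ≤ t}) ∩ {ω | t < |T k ω|} := by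
      ext ω; simp [hEdef]
    rw [h1]
    exact (MeasurableSet.iInter fun i => MeasurableSet.iInter fun _ =>
      measurableSet_le (hTmeas i).abs measurable_const).inter
      (measurableSet_lt measurable_const (hTmeas k).abs)
  have hdisj0 : ∀ i j, i < j → Disjoint (E i) (E j) := by
    intro i j hij
    refine Set.disjoint_left.mpr fun ω hi hj => ?_
    exact absurd (hj.1 i hij) (not_le.mpr hi.2)
  have hdisj : (↑(Finset.range (n + 1)) : Set ℕ).PairwiseDisjoint E := by
    intro i _ j _ hij
    rcases lt_or_gt_of_ne hij with h | h
    · exact hdisj0 i j h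
    · exact (hdisj0 j i h).symm
  have hcover : {ω | ∃ i ≤ n, t < |T i ω|} = ⋃ k ∈ Finset.range (n + 1), E k := by
    ext ω
    simp only [Set.mem_setOf_eq, Set.mem_iUnion, Finset.mem_range, exists_prop, hEdef]
    constructor
    · rintro ⟨i, hi, hti⟩
      have hex : ∃ m, m ≤ n ∧ t < |T m ω| := ⟨i, hi, hti⟩
      refine ⟨Nat.find hex, Nat.lt_succ_of_le (Nat.find_spec hex).1, fun i' hi' => ?_,
        (Nat.find_spec hex).2⟩
      have := Nat.find_min hex hi'
      push_neg at this
      exact this (le_trans (le_of_lt hi') (Nat.find_spec hex).1)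
    · rintro ⟨k, hk, _, hk2⟩
      exact ⟨k, Nat.lt_succ_iff.mp hk, hk2⟩
  -- step 1: Chebyshev on each piece
  have step1 : ∀ k, t ^ 2 * (μ (E k)).toReal ≤ ∫ ω in E k, T k ω ^ 2 ∂μ := by
    intro k
    refine (le_of_eq (by rw [smul_eq_mul, measureReal_def, mul_comm])).trans
      (setIntegral_ge_of_const_le (c := t ^ 2) (hEmeas k) (measure_ne_top μ _) (fun ω hω => ?_)
      ((hTL2 k).integrable_sq.integrableOn))
    have h2 := hω.2
    nlinarith [sq_abs (T k ω), abs_nonneg (T k ω)]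
  -- step 2
  have step2 : ∀ k ≤ n, ∫ ω in E k, T k ω ^ 2 ∂μ ≤ ∫ ω in E k, T n ω ^ 2 ∂μ := by
    intro k hk
    set D : Ω → ℝ := fun ω => ∑ j ∈ Finset.Ico (a + k) (a + n), X j ω with hDdef
    have hDmeas : Measurable D := Finset.measurable_sum _ fun j _ => hX j
    have hDL2 : MemLp D 2 μ := memLp_sum_fun hL2 _
    have hdecomp : ∀ ω, T n ω = T k ω + D ω := by
      intro ω
      rw [hTdef, hDdef]
      exact (Finset.sum_Ico_consecutive _ (Nat.le_add_right a k) (by omega)).symm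
    have hcross : ∫ ω in E k, T k ω * D ω ∂μ = 0 := by
      set S1 := Finset.Ico a (a + k) with hS1
      set S2 := Finset.Ico (a + k) (a + n) with hS2
      have hdisjS : Disjoint S1 S2 := Finset.Ico_disjoint_Ico_consecutive a (a + k) (a + n)
      set A : Set (ℕ → ℝ) := {u | (∀ i < k, |psum a i u| ≤ t) ∧ t < |psum a k u|} with hAdef
      have hAmeas : MeasurableSet A := by
        have h1 : A = (⋂ i, ⋂ _ : i < k, {u | |psum a i u| ≤ t}) ∩ {u | t < |psum a k u|} := by
          ext u; simp [hAdef]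
        rw [h1]
        exact (MeasurableSet.iInter fun i => MeasurableSet.iInter fun _ =>
          measurableSet_le (measurable_psum a i).abs measurable_const).inter
          (measurableSet_lt measurable_const (measurable_psum a k).abs)
      have hps : ∀ (ω : Ω), ∀ i ≤ k, psum a i (mask S1 X ω) = T i ω := by
        intro ω i hi
        exact psum_mask (Finset.Ico_subset_Ico le_rfl (by omega)) X ω
      have h1 : (A.indicator (psum a k) ∘ mask S1 X) = (E k).indicator (T k) := by
        funext ω
        have hmem : mask S1 X ω ∈ A ↔ ω ∈ E k := by
          simp only [hAdef, hEdef, Set.mem_setOf_eq]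
          constructor
          · rintro ⟨ha, hb⟩
            exact ⟨fun i hi => by rw [← hps ω i hi.le]; exact ha i hi,
              by rw [← hps ω k le_rfl]; exact hb⟩
          · rintro ⟨ha, hb⟩
            exact ⟨fun i hi => by rw [hps ω i hi.le]; exact ha i hi,
              by rw [hps ω k le_rfl]; exact hb⟩
        by_cases hω : ω ∈ E k
        · rw [Function.comp_apply, Set.indicator_of_mem (hmem.mpr hω),
            Set.indicator_of_mem hω, hps ω k le_rfl]
        · rw [Function.comp_apply, Set.indicator_of_notMem (fun hc => hω (hmem.mp hc)),
            Set.indicator_of_notMem hω]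
      have h2 : (psum (a + k) (n - k) ∘ mask S2 X) = D := by
        funext ω
        have he : Finset.Ico (a + k) (a + k + (n - k)) = S2 := by
          rw [hS2]; congr 1; omega
        rw [Function.comp_apply, psum_mask (le_of_eq he) X ω, hDdef]
        exact Finset.sum_congr he fun _ _ => rfl
      have hIF : IndepFun ((E k).indicator (T k)) D μ := by
        rw [← h1, ← h2]
        exact (indepFun_mask hX hind hdisjS).comp
          ((measurable_psum a k).indicator hAmeas) (measurable_psum (a + k) (n - k))
      have hindic : (E k).indicator (fun ω => T k ω * D ω)
          = fun ω => ((E k).indicator (T k) ω) * D ω := by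
        funext ω
        by_cases hω : ω ∈ E k
        · simp [Set.indicator_of_mem hω]
        · simp [Set.indicator_of_notMem hω]
      have hD0 : ∫ ω, D ω ∂μ = 0 := by
        rw [hDdef, integral_finset_sum _ fun j _ => (hL2 j).integrable one_le_two]
        simp [hcent]
      have hm := IndepFun.integral_mul_eq_mul_integral hIF (((hTL2 k).indicator (hEmeas k)).aestronglyMeasurable)
        hDL2.aestronglyMeasurable
      have h0 : integral μ ((E k).indicator (T k) * D) = 0 := by rw [hm, hD0, mul_zero]
      rw [← integral_indicator (hEmeas k), hindic]
      exact h0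
    have hDsq : 0 ≤ ∫ ω in E k, D ω ^ 2 ∂μ :=
      setIntegral_nonneg (hEmeas k) fun ω _ => sq_nonneg _
    have hexp : ∫ ω in E k, T n ω ^ 2 ∂μ
        = ∫ ω in E k, T k ω ^ 2 ∂μ + 2 * ∫ ω in E k, T k ω * D ω ∂μ
          + ∫ ω in E k, D ω ^ 2 ∂μ := by
      have hpt : (fun ω => T n ω ^ 2) = fun ω => T k ω ^ 2 + 2 * (T k ω * D ω) + D ω ^ 2 := by
        funext ω; rw [hdecomp ω]; ring
      rw [show (∫ ω in E k, T n ω ^ 2 ∂μ) = ∫ ω in E k, (T k ω ^ 2 + 2 * (T k ω * D ω) + D ω ^ 2) ∂μ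
          from by rw [← hpt]]
      have hI1 : Integrable (fun ω => T k ω ^ 2) (μ.restrict (E k)) :=
        (hTL2 k).integrable_sq.integrableOn
      have hI2 : Integrable (fun ω => 2 * (T k ω * D ω)) (μ.restrict (E k)) :=
        ((integrable_mul_L2 (hTL2 k) hDL2).const_mul 2).integrableOn
      have hI12 : Integrable (fun ω => T k ω ^ 2 + 2 * (T k ω * D ω)) (μ.restrict (E k)) :=
        hI1.add hI2
      have hI3 : Integrable (fun ω => D ω ^ 2) (μ.restrict (E k)) :=
        hDL2.integrable_sq.integrableOn
      rw [integral_add hI12 hI3, integral_add hI1 hI2, MeasureTheory.integral_const_mul]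
    rw [hexp, hcross]
    linarith
  -- assemble
  have hμU : μ {ω | ∃ i ≤ n, t < |T i ω|} = ∑ k ∈ Finset.range (n + 1), μ (E k) := by
    rw [hcover, measure_biUnion_finset hdisj fun k _ => hEmeas k]
  have hV0 : 0 ≤ ∑ j ∈ Finset.Ico a (a + n), ∫ ω, X j ω ^ 2 ∂μ :=
    Finset.sum_nonneg fun j _ => integral_nonneg fun ω => sq_nonneg _
  have hsum : ∑ k ∈ Finset.range (n + 1), t ^ 2 * (μ (E k)).toReal
      ≤ ∑ j ∈ Finset.Ico a (a + n), ∫ ω, X j ω ^ 2 ∂μ := by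
    calc ∑ k ∈ Finset.range (n + 1), t ^ 2 * (μ (E k)).toReal
        ≤ ∑ k ∈ Finset.range (n + 1), ∫ ω in E k, T n ω ^ 2 ∂μ :=
          Finset.sum_le_sum fun k hk =>
            (step1 k).trans (step2 k (Nat.lt_succ_iff.mp (Finset.mem_range.mp hk)))
      _ = ∫ ω in ⋃ k ∈ Finset.range (n + 1), E k, T n ω ^ 2 ∂μ :=
          (integral_biUnion_finset _ (fun k _ => hEmeas k) hdisj
            (fun k _ => (hTL2 n).integrable_sq.integrableOn)).symm
      _ ≤ ∫ ω, T n ω ^ 2 ∂μ :=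
          setIntegral_le_integral (hTL2 n).integrable_sq
            (Filter.Eventually.of_forall fun ω => sq_nonneg _)
      _ = ∑ j ∈ Finset.Ico a (a + n), ∫ ω, X j ω ^ 2 ∂μ :=
          integral_sq_sum hind hL2 hcent _
  rw [show {ω | ∃ i ≤ n, t < |∑ j ∈ Finset.Ico a (a + i), X j ω|}
      = {ω | ∃ i ≤ n, t < |T i ω|} from rfl]
  rw [ENNReal.le_ofReal_iff_toReal_le (by rw [hμU]; exact (ENNReal.sum_lt_top.mpr
      fun k _ => measure_lt_top μ _).ne) (div_nonneg hV0 (sq_nonneg t))]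
  rw [hμU, ENNReal.toReal_sum fun k _ => (measure_lt_top μ _).ne]
  rw [le_div_iff₀ (pow_pos ht 2)]
  calc (∑ k ∈ Finset.range (n + 1), (μ (E k)).toReal) * t ^ 2
      = ∑ k ∈ Finset.range (n + 1), t ^ 2 * (μ (E k)).toReal := by
        rw [Finset.sum_mul]; exact Finset.sum_congr rfl fun k _ => mul_comm _ _
    _ ≤ _ := hsum

variable {Ω : Type} [MeasurableSpace Ω] {μ : Measure Ω} {X : ℕ → Ω → ℝ}
variable [IsProbabilityMeasure μ]

lemma hj_step (hX : ∀ i, Measurable (X i))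
    (hind : iIndepFun X μ)
    (hL2 : ∀ k, MemLp (X k) 2 μ) (hcent : ∀ k, ∫ ω, X k ω ∂μ = 0)
    (n : ℕ) {t : ℝ} (ht : 0 < t) :
    μ {ω | ∃ i ≤ n, 3 * t < |∑ j ∈ Finset.range i, X j ω|} ≤
      μ {ω | ∃ j < n, t < |X j ω|} +
        ENNReal.ofReal ((∑ j ∈ Finset.range n, ∫ ω, X j ω ^ 2 ∂μ) / t ^ 2) *
          μ {ω | ∃ i ≤ n, t < |∑ j ∈ Finset.range i, X j ω|} := by
  classical
  set S : ℕ → Ω → ℝ := fun i ω => ∑ j ∈ Finset.range i, X j ω with hSdef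
  have hSmeas : ∀ i, Measurable (S i) := fun i => Finset.measurable_sum _ fun j _ => hX j
  set E : ℕ → Set Ω := fun k => {ω | (∀ i < k, |S i ω| ≤ t) ∧ t < |S k ω|} with hEdef
  have hEmeas : ∀ k, MeasurableSet (E k) := by
    intro k
    have h1 : E k = (⋂ i, ⋂ _ : i < k, {ω | |S i ω| ≤ t}) ∩ {ω | t < |S k ω|} := by
      ext ω; simp [hEdef]
    rw [h1]
    exact (MeasurableSet.iInter fun i => MeasurableSet.iInter fun _ =>
      measurableSet_le (hSmeas i).abs measurable_const).inter
      (measurableSet_lt measurable_const (hSmeas k).abs)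
  have hdisj0 : ∀ i j, i < j → Disjoint (E i) (E j) := by
    intro i j hij
    refine Set.disjoint_left.mpr fun ω hi hj => ?_
    exact absurd (hj.1 i hij) (not_le.mpr hi.2)
  have hdisj : (↑(Finset.range (n + 1)) : Set ℕ).PairwiseDisjoint E := by
    intro i _ j _ hij
    rcases lt_or_gt_of_ne hij with h | h
    · exact hdisj0 i j h
    · exact (hdisj0 j i h).symm
  have hcover : {ω | ∃ i ≤ n, t < |S i ω|} = ⋃ k ∈ Finset.range (n + 1), E k := by
    ext ω
    simp only [Set.mem_setOf_eq, Set.mem_iUnion, Finset.mem_range, exists_prop, hEdef]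
    constructor
    · rintro ⟨i, hi, hti⟩
      have hex : ∃ m, m ≤ n ∧ t < |S m ω| := ⟨i, hi, hti⟩
      refine ⟨Nat.find hex, Nat.lt_succ_of_le (Nat.find_spec hex).1, fun i' hi' => ?_,
        (Nat.find_spec hex).2⟩
      have := Nat.find_min hex hi'
      push_neg at this
      exact this (le_trans (le_of_lt hi') (Nat.find_spec hex).1)
    · rintro ⟨k, hk, _, hk2⟩
      exact ⟨k, Nat.lt_succ_iff.mp hk, hk2⟩
  set K : ℕ → Set Ω :=
    fun k => {ω | ∃ i ≤ n - k, t < |∑ j ∈ Finset.Ico k (k + i), X j ω|} with hKdef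
  -- inclusion
  have hincl : {ω | ∃ i ≤ n, 3 * t < |S i ω|} ⊆
      {ω | ∃ j < n, t < |X j ω|} ∪ ⋃ k ∈ Finset.range (n + 1), (E k ∩ K k) := by
    rintro ω ⟨m, hm, h3t⟩
    by_cases hU : ∃ j, j < n ∧ t < |X j ω|
    · left
      obtain ⟨j, hj1, hj2⟩ := hU
      exact ⟨j, hj1, hj2⟩
    · right
      push_neg at hU
      have hex : ∃ i, i ≤ n ∧ t < |S i ω| := ⟨m, hm, by linarith⟩
      set k := Nat.find hex with hkdef
      obtain ⟨hkn, hkt⟩ := Nat.find_spec hex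
      rw [← hkdef] at hkn hkt
      have hmin : ∀ i < k, |S i ω| ≤ t := by
        intro i hi
        have := Nat.find_min hex (hkdef ▸ hi)
        push_neg at this
        exact this (le_trans hi.le hkn)
      have hk1 : 1 ≤ k := by
        rcases Nat.eq_zero_or_pos k with h | h
        · rw [h] at hkt
          simp only [hSdef, Finset.range_zero, Finset.sum_empty, abs_zero] at hkt
          linarith
        · exact h
      obtain ⟨l, hl⟩ : ∃ l, k = l + 1 := ⟨k - 1, by omega⟩
      have hsplit : S k ω = S l ω + X l ω := by
        rw [hl]
        simp only [hSdef]
        rw [Finset.sum_range_succ]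
      have hSk2 : |S k ω| ≤ 2 * t := by
        have h1 : |S l ω| ≤ t := hmin l (by omega)
        have h2 : |X l ω| ≤ t := hU l (by omega)
        calc |S k ω| ≤ |S l ω| + |X l ω| := hsplit ▸ abs_add_le _ _
          _ ≤ 2 * t := by linarith
      have hmk : k < m := by
        by_contra hc
        push_neg at hc
        rcases lt_or_eq_of_le hc with h | h
        · have := hmin m h
          linarith
        · rw [h] at h3t
          linarith
      refine Set.mem_iUnion.mpr ⟨k, Set.mem_iUnion.mpr ⟨Finset.mem_range.mpr (by omega),
        ⟨⟨hmin, hkt⟩, ?_⟩⟩⟩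
      refine ⟨m - k, by omega, ?_⟩
      have hIco : ∑ j ∈ Finset.Ico k (k + (m - k)), X j ω = S m ω - S k ω := by
        have h1 : ∑ j ∈ Finset.Ico 0 k, X j ω + ∑ j ∈ Finset.Ico k m, X j ω
            = ∑ j ∈ Finset.Ico 0 m, X j ω :=
          Finset.sum_Ico_consecutive _ (Nat.zero_le k) hmk.le
        have h2 : Finset.Ico k (k + (m - k)) = Finset.Ico k m := by congr 1; omega
        rw [h2]
        have h3 : S m ω = ∑ j ∈ Finset.Ico 0 m, X j ω := by
          simp only [hSdef]; rw [Finset.range_eq_Ico]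
        have h4 : S k ω = ∑ j ∈ Finset.Ico 0 k, X j ω := by
          simp only [hSdef]; rw [Finset.range_eq_Ico]
        rw [h3, h4]; linarith
      rw [hIco]
      have := abs_sub_abs_le_abs_sub (S m ω) (S k ω)
      linarith
  -- independence of the two blocks
  have hprod : ∀ k ≤ n, μ (E k ∩ K k) = μ (E k) * μ (K k) := by
    intro k hk
    set S1 := Finset.range k with hS1
    set S2 := Finset.Ico k n with hS2
    have hdisjS : Disjoint S1 S2 := by
      rw [Finset.disjoint_left]
      intro j hj1 hj2
      rw [hS1, Finset.mem_range] at hj1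
      rw [hS2, Finset.mem_Ico] at hj2
      omega
    set A : Set (ℕ → ℝ) := {u | (∀ i < k, |psum 0 i u| ≤ t) ∧ t < |psum 0 k u|} with hAdef
    have hAmeas : MeasurableSet A := by
      have h1 : A = (⋂ i, ⋂ _ : i < k, {u | |psum 0 i u| ≤ t}) ∩ {u | t < |psum 0 k u|} := by
        ext u; simp [hAdef]
      rw [h1]
      exact (MeasurableSet.iInter fun i => MeasurableSet.iInter fun _ =>
        measurableSet_le (measurable_psum 0 i).abs measurable_const).inter
        (measurableSet_lt measurable_const (measurable_psum 0 k).abs)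
    set B : Set (ℕ → ℝ) := {u | ∃ i ≤ n - k, t < |psum k i u|} with hBdef
    have hBmeas : MeasurableSet B := by
      have h1 : B = ⋃ i, ⋃ _ : i ≤ n - k, {u | t < |psum k i u|} := by
        ext u; simp [hBdef]
      rw [h1]
      exact MeasurableSet.iUnion fun i => MeasurableSet.iUnion fun _ =>
        measurableSet_lt measurable_const (measurable_psum k i).abs
    have hps : ∀ (ω : Ω), ∀ i ≤ k, psum 0 i (mask S1 X ω) = S i ω := by
      intro ω i hi
      have hsub : Finset.Ico 0 (0 + i) ⊆ S1 := by
        rw [hS1, Finset.range_eq_Ico]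
        exact Finset.Ico_subset_Ico le_rfl (by omega)
      rw [psum_mask hsub X ω, Nat.zero_add, ← Finset.range_eq_Ico]
    have hps2 : ∀ (ω : Ω), ∀ i ≤ n - k, psum k i (mask S2 X ω)
        = ∑ j ∈ Finset.Ico k (k + i), X j ω := by
      intro ω i hi
      exact psum_mask (by rw [hS2]; exact Finset.Ico_subset_Ico le_rfl (by omega)) X ω
    have hE : E k = mask S1 X ⁻¹' A := by
      ext ω
      simp only [Set.mem_preimage, hAdef, hEdef, Set.mem_setOf_eq]
      constructor
      · rintro ⟨ha, hb⟩
        exact ⟨fun i hi => by rw [hps ω i hi.le]; exact ha i hi,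
          by rw [hps ω k le_rfl]; exact hb⟩
      · rintro ⟨ha, hb⟩
        exact ⟨fun i hi => by rw [← hps ω i hi.le]; exact ha i hi,
          by rw [← hps ω k le_rfl]; exact hb⟩
    have hK : K k = mask S2 X ⁻¹' B := by
      ext ω
      simp only [Set.mem_preimage, hBdef, hKdef, Set.mem_setOf_eq]
      constructor
      · rintro ⟨i, hi, hb⟩
        exact ⟨i, hi, by rw [hps2 ω i hi]; exact hb⟩
      · rintro ⟨i, hi, hb⟩
        exact ⟨i, hi, by rw [← hps2 ω i hi]; exact hb⟩
    rw [hE, hK]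
    exact (indepFun_mask hX hind hdisjS).measure_inter_preimage_eq_mul _ _ hAmeas hBmeas
  -- Kolmogorov bound for each `K k`
  have hKbound : ∀ k ≤ n,
      μ (K k) ≤ ENNReal.ofReal ((∑ j ∈ Finset.range n, ∫ ω, X j ω ^ 2 ∂μ) / t ^ 2) := by
    intro k hk
    refine le_trans (kolmogorov hX hind hL2 hcent k (n - k) ht) (ENNReal.ofReal_le_ofReal ?_)
    have hsub : Finset.Ico k (k + (n - k)) ⊆ Finset.range n := by
      intro j hj
      rw [Finset.mem_Ico] at hj
      rw [Finset.mem_range]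
      omega
    have hle : (∑ j ∈ Finset.Ico k (k + (n - k)), ∫ ω, X j ω ^ 2 ∂μ)
        ≤ ∑ j ∈ Finset.range n, ∫ ω, X j ω ^ 2 ∂μ :=
      Finset.sum_le_sum_of_subset_of_nonneg hsub
        fun j _ _ => integral_nonneg fun ω => sq_nonneg _
    gcongr
  -- put everything together
  calc μ {ω | ∃ i ≤ n, 3 * t < |S i ω|}
      ≤ μ ({ω | ∃ j < n, t < |X j ω|} ∪ ⋃ k ∈ Finset.range (n + 1), (E k ∩ K k)) :=
        measure_mono hincl
    _ ≤ μ {ω | ∃ j < n, t < |X j ω|} + μ (⋃ k ∈ Finset.range (n + 1), (E k ∩ K k)) :=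
        measure_union_le _ _
    _ ≤ μ {ω | ∃ j < n, t < |X j ω|} + ∑ k ∈ Finset.range (n + 1), μ (E k ∩ K k) := by
        gcongr
        exact measure_biUnion_finset_le _ _
    _ ≤ μ {ω | ∃ j < n, t < |X j ω|} + ∑ k ∈ Finset.range (n + 1),
          μ (E k) * ENNReal.ofReal ((∑ j ∈ Finset.range n, ∫ ω, X j ω ^ 2 ∂μ) / t ^ 2) := by
        gcongr with k hk
        rw [hprod k (Nat.lt_succ_iff.mp (Finset.mem_range.mp hk))]
        exact mul_le_mul_right (hKbound k (Nat.lt_succ_iff.mp (Finset.mem_range.mp hk))) _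
    _ = μ {ω | ∃ j < n, t < |X j ω|} +
          ENNReal.ofReal ((∑ j ∈ Finset.range n, ∫ ω, X j ω ^ 2 ∂μ) / t ^ 2) *
            μ {ω | ∃ i ≤ n, t < |S i ω|} := by
        rw [hcover, measure_biUnion_finset hdisj fun k _ => hEmeas k, ← Finset.sum_mul,
          mul_comm]

section part4
variable {Ω : Type} [MeasurableSpace Ω] {μ : Measure Ω} {X : ℕ → Ω → ℝ}

lemma rpow_primitive {p : ℝ} (hp : 1 ≤ p) {x : ℝ} (hx : 0 ≤ x) :
    ∫ s in (0)..x, p * s ^ (p - 1) = x ^ p := by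
  have hp0 : p ≠ 0 := by linarith
  rw [intervalIntegral.integral_const_mul, integral_rpow (Or.inl (by linarith : (-1:ℝ) < p - 1))]
  rw [sub_add_cancel, Real.zero_rpow hp0, sub_zero]
  field_simp

lemma layercake_rpow {f : Ω → ℝ} (hf : Measurable f) (hfnn : ∀ ω, 0 ≤ f ω) {p : ℝ} (hp : 1 ≤ p) :
    ∫⁻ ω, ENNReal.ofReal (f ω ^ p) ∂μ
      = ∫⁻ t in Ioi (0:ℝ), μ {a | t < f a} * ENNReal.ofReal (p * t ^ (p - 1)) := by
  have key := lintegral_comp_eq_lintegral_meas_lt_mul μ (f := f) (g := fun t => p * t ^ (p - 1))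
    (Filter.Eventually.of_forall hfnn) hf.aemeasurable
    (fun t _ => (intervalIntegral.intervalIntegrable_rpow' (by linarith)).const_mul p)
    ((ae_restrict_iff' measurableSet_Ioi).2 (Filter.Eventually.of_forall fun t ht => by
      have : (0:ℝ) < t := ht
      positivity))
  rw [← key]
  refine lintegral_congr fun ω => ?_
  rw [rpow_primitive hp (hfnn ω)]

lemma measurable_rpow_c {f : Ω → ℝ} (hf : Measurable f) {q : ℝ} (hq : 0 ≤ q) :
    Measurable fun ω => f ω ^ q :=
  (Real.continuous_rpow_const hq).measurable.comp hf

lemma main_est {p : ℝ} (hp : 2 ≤ p) {n : ℕ} [IsProbabilityMeasure μ]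
    (hX : ∀ i, Measurable (X i))
    (hind : iIndepFun X μ)
    (hmem : ∀ k, MemLp (X k) (ENNReal.ofReal p) μ)
    (hcent : ∀ k, ∫ ω, X k ω ∂μ = 0) :
    ∫ ω, (⨆ k : Fin (n + 1), |∑ j ∈ Finset.range (k : ℕ), X j ω|) ^ p ∂μ ≤
      (2 * 3 ^ p + 2 * (18 * 3 ^ p) ^ (p / 2)) *
        ((∑ k ∈ Finset.range n, ∫ ω, |X k ω| ^ p ∂μ) +
          (∑ k ∈ Finset.range n, ∫ ω, X k ω ^ 2 ∂μ) ^ (p / 2)) := by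
  classical
  have hp0 : (0:ℝ) < p := by linarith
  have hp1 : (1:ℝ) ≤ p := by linarith
  have hL2 : ∀ k, MemLp (X k) 2 μ := by
    intro k
    refine (hmem k).mono_exponent ?_
    rw [show (2 : ENNReal) = ENNReal.ofReal 2 by simp]
    exact ENNReal.ofReal_le_ofReal hp
  set A : ℝ := ∑ k ∈ Finset.range n, ∫ ω, |X k ω| ^ p ∂μ with hAdef
  set B : ℝ := ∑ k ∈ Finset.range n, ∫ ω, X k ω ^ 2 ∂μ with hBdef
  have hA0 : 0 ≤ A := Finset.sum_nonneg fun k _ => integral_nonneg fun ω =>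
    Real.rpow_nonneg (abs_nonneg _) p
  have hB0 : 0 ≤ B := Finset.sum_nonneg fun k _ => integral_nonneg fun ω => sq_nonneg _
  have hXpInt : ∀ k, Integrable (fun ω => |X k ω| ^ p) μ := by
    intro k
    have h := (hmem k).integrable_norm_rpow (by simp [ENNReal.ofReal_eq_zero]; linarith)
      ENNReal.ofReal_ne_top
    rw [ENNReal.toReal_ofReal hp0.le] at h
    exact h.congr (Filter.Eventually.of_forall fun ω => by simp [Real.norm_eq_abs])
  rcases Nat.eq_zero_or_pos n with hn | hn
  · subst hn
    have h0 : ∀ ω : Ω, (⨆ k : Fin 1, |∑ j ∈ Finset.range (k : ℕ), X j ω|) = 0 := by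
      intro ω
      rw [ciSup_unique]
      simp
    simp only [h0, Real.zero_rpow hp0.ne']
    rw [integral_zero]
    simp only [hAdef, hBdef, Finset.range_zero, Finset.sum_empty] at *
    rw [Real.zero_rpow (by positivity : p / 2 ≠ 0)]
    simp
  -- now 1 ≤ n
  haveI hFn : Nonempty (Fin n) := ⟨⟨0, hn⟩⟩
  set M : Ω → ℝ := fun ω => ⨆ k : Fin (n + 1), |∑ j ∈ Finset.range (k : ℕ), X j ω| with hMdef
  have hSmeas : ∀ i : ℕ, Measurable fun ω => ∑ j ∈ Finset.range i, X j ω :=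
    fun i => Finset.measurable_sum _ fun j _ => hX j
  have hMmeas : Measurable M := Measurable.iSup fun k => (hSmeas (k : ℕ)).abs
  have hbdd : ∀ ω, BddAbove (Set.range fun k : Fin (n + 1) =>
      |∑ j ∈ Finset.range (k : ℕ), X j ω|) := fun ω => Set.Finite.bddAbove (Set.finite_range _)
  have hM0 : ∀ ω, 0 ≤ M ω := by
    intro ω
    have := le_ciSup (hbdd ω) (0 : Fin (n + 1))
    simpa using this
  have hMlt : ∀ t : ℝ, {ω | t < M ω} = {ω | ∃ i ≤ n, t < |∑ j ∈ Finset.range i, X j ω|} := by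
    intro t
    ext ω
    simp only [Set.mem_setOf_eq, hMdef]
    rw [lt_ciSup_iff (hbdd ω)]
    constructor
    · rintro ⟨k, hk⟩
      exact ⟨(k : ℕ), Nat.lt_succ_iff.mp k.isLt, hk⟩
    · rintro ⟨i, hi, hti⟩
      exact ⟨⟨i, Nat.lt_succ_of_le hi⟩, hti⟩
  set maxX : Ω → ℝ := fun ω => ⨆ j : Fin n, |X j ω| with hmaxdef
  have hmaxmeas : Measurable maxX := Measurable.iSup fun j => (hX (j : ℕ)).abs
  have hmaxbdd : ∀ ω, BddAbove (Set.range fun j : Fin n => |X j ω|) :=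
    fun ω => Set.Finite.bddAbove (Set.finite_range _)
  have hmax0 : ∀ ω, 0 ≤ maxX ω := by
    intro ω
    have := le_ciSup (hmaxbdd ω) (⟨0, hn⟩ : Fin n)
    exact le_trans (abs_nonneg _) this
  have hmaxlt : ∀ t : ℝ, {ω | t < 3 * maxX ω} = {ω | ∃ j < n, t / 3 < |X j ω|} := by
    intro t
    ext ω
    simp only [Set.mem_setOf_eq]
    constructor
    · intro h
      have h3 : t / 3 < maxX ω := by linarith
      obtain ⟨j, hj⟩ := (lt_ciSup_iff (hmaxbdd ω)).mp h3
      exact ⟨(j : ℕ), j.isLt, hj⟩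
    · rintro ⟨j, hj, htj⟩
      have h3 : t / 3 < maxX ω := lt_of_lt_of_le htj (le_ciSup (hmaxbdd ω) ⟨j, hj⟩)
      linarith
  -- M is in L^p
  have hSL : ∀ k : ℕ, MemLp (fun ω => ∑ j ∈ Finset.range k, X j ω) (ENNReal.ofReal p) μ :=
    fun k => memLp_sum_fun hmem _
  have hMLp : MemLp M (ENNReal.ofReal p) μ := by
    set g : Ω → ℝ := fun ω => ∑ k ∈ Finset.range (n + 1), |∑ j ∈ Finset.range k, X j ω|
      with hgdef
    have hg : MemLp g (ENNReal.ofReal p) μ := by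
      have h := memLp_finset_sum' (μ := μ) (Finset.range (n + 1))
        (fun k (_ : k ∈ Finset.range (n + 1)) => (hSL k).abs)
      have he : (∑ k ∈ Finset.range (n + 1), |fun ω => ∑ j ∈ Finset.range k, X j ω|) = g := by
        funext ω
        rw [hgdef]
        simp [Finset.sum_apply]
      rwa [he] at h
    refine hg.of_le hMmeas.aestronglyMeasurable (Filter.Eventually.of_forall fun ω => ?_)
    have hg0 : 0 ≤ g ω := Finset.sum_nonneg fun k _ => abs_nonneg _
    have hMg : M ω ≤ g ω := by
      refine ciSup_le fun k => ?_
      exact Finset.single_le_sum (f := fun k => |∑ j ∈ Finset.range k, X j ω|)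
        (fun k _ => abs_nonneg _) (Finset.mem_range.mpr k.isLt)
    rw [Real.norm_eq_abs, Real.norm_eq_abs, abs_of_nonneg (hM0 ω), abs_of_nonneg hg0]
    exact hMg
  have hMp_int : Integrable (fun ω => M ω ^ p) μ := by
    have h := hMLp.integrable_norm_rpow (by simp [ENNReal.ofReal_eq_zero]; linarith)
      ENNReal.ofReal_ne_top
    rw [ENNReal.toReal_ofReal hp0.le] at h
    exact h.congr (Filter.Eventually.of_forall fun ω => by
      simp [Real.norm_eq_abs, abs_of_nonneg (hM0 ω)])
  set L : ENNReal := ∫⁻ ω, ENNReal.ofReal (M ω ^ p) ∂μ with hLdef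
  have hLfin : L ≠ ⊤ := hMp_int.lintegral_lt_top.ne
  have hLC : L = ∫⁻ t in Ioi (0:ℝ), μ {a | t < M a} * ENNReal.ofReal (p * t ^ (p - 1)) :=
    layercake_rpow hMmeas hM0 hp1
  have h3M : ∫⁻ t in Ioi (0:ℝ), μ {a | t < 3 * M a} * ENNReal.ofReal (p * t ^ (p - 1))
      = ENNReal.ofReal (3 ^ p) * L := by
    rw [← layercake_rpow (hMmeas.const_mul 3) (fun ω => by have := hM0 ω; positivity) hp1]
    rw [hLdef, ← lintegral_const_mul' _ _ ENNReal.ofReal_ne_top]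
    refine lintegral_congr fun ω => ?_
    rw [Real.mul_rpow (by norm_num) (hM0 ω), ENNReal.ofReal_mul (by positivity)]
  have h3maxX : ∫⁻ t in Ioi (0:ℝ), μ {a | t < 3 * maxX a} * ENNReal.ofReal (p * t ^ (p - 1))
      ≤ ENNReal.ofReal (3 ^ p) * ENNReal.ofReal A := by
    rw [← layercake_rpow (hmaxmeas.const_mul 3) (fun ω => by have := hmax0 ω; positivity) hp1]
    have hpt : ∀ ω, ENNReal.ofReal ((3 * maxX ω) ^ p)
        = ENNReal.ofReal (3 ^ p) * ENNReal.ofReal (maxX ω ^ p) := by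
      intro ω
      rw [Real.mul_rpow (by norm_num) (hmax0 ω), ENNReal.ofReal_mul (by positivity)]
    calc ∫⁻ ω, ENNReal.ofReal ((3 * maxX ω) ^ p) ∂μ
        = ENNReal.ofReal (3 ^ p) * ∫⁻ ω, ENNReal.ofReal (maxX ω ^ p) ∂μ := by
          rw [← lintegral_const_mul' _ _ ENNReal.ofReal_ne_top]
          exact lintegral_congr hpt
      _ ≤ ENNReal.ofReal (3 ^ p) * ENNReal.ofReal A := by
          gcongr
          calc ∫⁻ ω, ENNReal.ofReal (maxX ω ^ p) ∂μ
              ≤ ∫⁻ ω, ∑ k ∈ Finset.range n, ENNReal.ofReal (|X k ω| ^ p) ∂μ := by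
                refine lintegral_mono fun ω => ?_
                obtain ⟨j0, hj0⟩ := exists_eq_ciSup_of_finite
                  (f := fun j : Fin n => |X j ω|)
                have hle : maxX ω ^ p ≤ ∑ k ∈ Finset.range n, |X k ω| ^ p := by
                  rw [hmaxdef]
                  simp only
                  rw [← hj0]
                  exact Finset.single_le_sum
                    (f := fun k => |X k ω| ^ p)
                    (fun k _ => Real.rpow_nonneg (abs_nonneg _) p)
                    (Finset.mem_range.mpr j0.isLt)
                calc ENNReal.ofReal (maxX ω ^ p)
                    ≤ ENNReal.ofReal (∑ k ∈ Finset.range n, |X k ω| ^ p) :=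
                      ENNReal.ofReal_le_ofReal hle
                  _ = ∑ k ∈ Finset.range n, ENNReal.ofReal (|X k ω| ^ p) :=
                      ENNReal.ofReal_sum_of_nonneg fun k _ =>
                        Real.rpow_nonneg (abs_nonneg _) p
            _ = ∑ k ∈ Finset.range n, ∫⁻ ω, ENNReal.ofReal (|X k ω| ^ p) ∂μ :=
                lintegral_finset_sum _ fun k _ =>
                  ENNReal.measurable_ofReal.comp (measurable_rpow_c (hX k).abs hp0.le)
            _ = ENNReal.ofReal A := by
                rw [hAdef, ENNReal.ofReal_sum_of_nonneg fun k _ =>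
                  integral_nonneg fun ω => Real.rpow_nonneg (abs_nonneg _) p]
                exact Finset.sum_congr rfl fun k _ =>
                  (ofReal_integral_eq_lintegral_ofReal (hXpInt k)
                    (Filter.Eventually.of_forall fun ω =>
                      Real.rpow_nonneg (abs_nonneg _) p)).symm
  -- the tail inequality
  have htail : ∀ t : ℝ, 0 < t → μ {a | t < M a} ≤ μ {a | t < 3 * maxX a}
      + min 1 (ENNReal.ofReal (9 * B / t ^ 2)) * μ {a | t < 3 * M a} := by
    intro t ht
    have ht3 : 0 < t / 3 := by linarith
    have hhj := hj_step hX hind hL2 hcent n ht3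
    have e1 : {ω | ∃ i ≤ n, 3 * (t / 3) < |∑ j ∈ Finset.range i, X j ω|} = {a | t < M a} := by
      rw [hMlt]
      have : 3 * (t / 3) = t := by ring
      rw [this]
    have e3 : {ω | ∃ i ≤ n, t / 3 < |∑ j ∈ Finset.range i, X j ω|} = {a | t < 3 * M a} := by
      rw [← hMlt]
      ext a
      simp only [Set.mem_setOf_eq]
      constructor <;> intro <;> linarith
    have e4 : B / (t / 3) ^ 2 = 9 * B / t ^ 2 := by
      field_simp
      ring
    rw [e1, e3, e4] at hhj
    rw [← hmaxlt t] at hhj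
    rcases le_total (ENNReal.ofReal (9 * B / t ^ 2)) 1 with h | h
    · rw [min_eq_right h]
      exact hhj
    · rw [min_eq_left h, one_mul]
      have hsub : {a | t < M a} ⊆ {a | t < 3 * M a} := by
        intro a ha
        simp only [Set.mem_setOf_eq] at ha ⊢
        have := hM0 a
        linarith
      calc μ {a | t < M a} ≤ μ {a | t < 3 * M a} := measure_mono hsub
        _ ≤ _ := self_le_add_left _ _
  -- measurability in t
  have hanti : ∀ f : Ω → ℝ, Antitone fun t => μ {a | t < f a} := by
    intro f s t hst
    exact measure_mono fun a ha => lt_of_le_of_lt hst ha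
  have hgmeas : Measurable fun t : ℝ => ENNReal.ofReal (p * t ^ (p - 1)) :=
    ENNReal.measurable_ofReal.comp (measurable_const.mul (measurable_rpow_c measurable_id (by linarith : (0:ℝ) ≤ p - 1)))
  -- main split
  set t1 : ℝ := Real.sqrt (18 * 3 ^ p * B) with ht1def
  have ht10 : 0 ≤ t1 := Real.sqrt_nonneg _
  have hsplit : L ≤ ENNReal.ofReal (3 ^ p) * ENNReal.ofReal A
      + (ENNReal.ofReal (t1 ^ p) + ENNReal.ofReal (1 / 2) * L) := by
    calc L
        = ∫⁻ t in Ioi (0:ℝ), μ {a | t < M a} * ENNReal.ofReal (p * t ^ (p - 1)) := hLC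
      _ ≤ ∫⁻ t in Ioi (0:ℝ), (μ {a | t < 3 * maxX a}
            + min 1 (ENNReal.ofReal (9 * B / t ^ 2)) * μ {a | t < 3 * M a})
            * ENNReal.ofReal (p * t ^ (p - 1)) := by
          refine lintegral_mono_ae ((ae_restrict_iff' measurableSet_Ioi).2
            (Filter.Eventually.of_forall fun t ht => ?_))
          exact mul_le_mul_left (htail t ht) _
      _ = (∫⁻ t in Ioi (0:ℝ), μ {a | t < 3 * maxX a} * ENNReal.ofReal (p * t ^ (p - 1)))
          + ∫⁻ t in Ioi (0:ℝ), min 1 (ENNReal.ofReal (9 * B / t ^ 2)) * μ {a | t < 3 * M a}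
            * ENNReal.ofReal (p * t ^ (p - 1)) := by
          simp_rw [add_mul]
          rw [lintegral_add_left (f := fun t => μ {a | t < 3 * maxX a} * ENNReal.ofReal (p * t ^ (p - 1))) (((hanti _).measurable).mul hgmeas)]
      _ ≤ ENNReal.ofReal (3 ^ p) * ENNReal.ofReal A
          + (ENNReal.ofReal (t1 ^ p) + ENNReal.ofReal (1 / 2) * L) := by
          refine add_le_add h3maxX ?_
          -- split the second integral at t1
          calc ∫⁻ t in Ioi (0:ℝ), min 1 (ENNReal.ofReal (9 * B / t ^ 2)) * μ {a | t < 3 * M a}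
                * ENNReal.ofReal (p * t ^ (p - 1))
              ≤ (∫⁻ t in Ioc (0:ℝ) t1, min 1 (ENNReal.ofReal (9 * B / t ^ 2))
                  * μ {a | t < 3 * M a} * ENNReal.ofReal (p * t ^ (p - 1)))
                + ∫⁻ t in Ioi t1, min 1 (ENNReal.ofReal (9 * B / t ^ 2))
                  * μ {a | t < 3 * M a} * ENNReal.ofReal (p * t ^ (p - 1)) := by
                rw [← Set.Ioc_union_Ioi_eq_Ioi ht10]
                exact lintegral_union_le _ _ _
            _ ≤ ENNReal.ofReal (t1 ^ p) + ENNReal.ofReal (1 / 2) * L := by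
                refine add_le_add ?_ ?_
                · -- small t part
                  calc ∫⁻ t in Ioc (0:ℝ) t1, min 1 (ENNReal.ofReal (9 * B / t ^ 2))
                      * μ {a | t < 3 * M a} * ENNReal.ofReal (p * t ^ (p - 1))
                      ≤ ∫⁻ t in Ioc (0:ℝ) t1, ENNReal.ofReal (p * t ^ (p - 1)) := by
                        refine lintegral_mono fun t => ?_
                        calc min 1 (ENNReal.ofReal (9 * B / t ^ 2)) * μ {a | t < 3 * M a}
                            * ENNReal.ofReal (p * t ^ (p - 1))
                            ≤ 1 * 1 * ENNReal.ofReal (p * t ^ (p - 1)) := by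
                              gcongr
                              · exact min_le_left _ _
                              · exact prob_le_one
                          _ = ENNReal.ofReal (p * t ^ (p - 1)) := by rw [one_mul, one_mul]
                    _ = ENNReal.ofReal (t1 ^ p) := by
                        have hII : IntervalIntegrable (fun s => p * s ^ (p - 1)) volume 0 t1 :=
                          (intervalIntegral.intervalIntegrable_rpow'
                            (by linarith)).const_mul p
                        rw [← ofReal_integral_eq_lintegral_ofReal
                          ((intervalIntegrable_iff_integrableOn_Ioc_of_le ht10).mp hII)
                          ((ae_restrict_iff' measurableSet_Ioc).2
                            (Filter.Eventually.of_forall fun t ht => by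
                              have : (0:ℝ) < t := ht.1
                              positivity))]
                        rw [← intervalIntegral.integral_of_le ht10, rpow_primitive hp1 ht10]
                · -- large t part
                  calc ∫⁻ t in Ioi t1, min 1 (ENNReal.ofReal (9 * B / t ^ 2))
                      * μ {a | t < 3 * M a} * ENNReal.ofReal (p * t ^ (p - 1))
                      ≤ ∫⁻ t in Ioi t1, ENNReal.ofReal (1 / (2 * 3 ^ p))
                        * (μ {a | t < 3 * M a} * ENNReal.ofReal (p * t ^ (p - 1))) := by
                        refine lintegral_mono_ae ((ae_restrict_iff' measurableSet_Ioi).2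
                          (Filter.Eventually.of_forall fun t ht => ?_))
                        rw [mul_assoc]
                        refine mul_le_mul_left ?_ _
                        rcases eq_or_lt_of_le hB0 with hB | hB
                        · have : (9 * B / t ^ 2) = 0 := by rw [← hB]; ring
                          rw [this]
                          simp
                        · have ht1pos : 0 < t1 := Real.sqrt_pos.mpr (by positivity)
                          have htpos : t1 < t := ht
                          have ht0 : 0 < t := lt_trans ht1pos htpos
                          refine le_trans (min_le_right _ _) (ENNReal.ofReal_le_ofReal ?_)
                          have hsq : t1 ^ 2 = 18 * 3 ^ p * B := Real.sq_sqrt (by positivity)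
                          have h1 : 9 * B / t ^ 2 ≤ 9 * B / t1 ^ 2 := by
                            rw [div_le_div_iff₀ (by positivity) (by positivity)]
                            have hsq2 : t1 ^ 2 ≤ t ^ 2 :=
                              pow_le_pow_left₀ ht1pos.le htpos.le 2
                            nlinarith [hsq2, hB]
                          have h2 : 9 * B / t1 ^ 2 = 1 / (2 * 3 ^ p) := by
                            rw [hsq]
                            have h3p : (0:ℝ) < 3 ^ p := by positivity
                            field_simp
                            ring
                          linarith
                    _ = ENNReal.ofReal (1 / (2 * 3 ^ p))
                        * ∫⁻ t in Ioi t1, μ {a | t < 3 * M a}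
                          * ENNReal.ofReal (p * t ^ (p - 1)) :=
                        lintegral_const_mul' _ _ ENNReal.ofReal_ne_top
                    _ ≤ ENNReal.ofReal (1 / (2 * 3 ^ p))
                        * ∫⁻ t in Ioi (0:ℝ), μ {a | t < 3 * M a}
                          * ENNReal.ofReal (p * t ^ (p - 1)) := by
                        gcongr
                    _ = ENNReal.ofReal (1 / 2) * L := by
                        rw [h3M, ← mul_assoc, ← ENNReal.ofReal_mul (by positivity)]
                        congr 2
                        have h3p : (0:ℝ) < 3 ^ p := by positivity
                        field_simp
  -- conclude from hsplit
  have hhl : ENNReal.ofReal (1 / 2) * L ≠ ⊤ := ENNReal.mul_ne_top ENNReal.ofReal_ne_top hLfin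
  have hLreal : L.toReal ≤ 3 ^ p * A + t1 ^ p + 1 / 2 * L.toReal := by
    have hfin2 : ENNReal.ofReal (3 ^ p) * ENNReal.ofReal A + ENNReal.ofReal (t1 ^ p)
        + ENNReal.ofReal (1 / 2) * L ≠ ⊤ := by
      refine ENNReal.add_ne_top.mpr ⟨ENNReal.add_ne_top.mpr ⟨?_, ?_⟩, hhl⟩
      · exact ENNReal.mul_ne_top ENNReal.ofReal_ne_top ENNReal.ofReal_ne_top
      · exact ENNReal.ofReal_ne_top
    have hsp : L ≤ ENNReal.ofReal (3 ^ p) * ENNReal.ofReal A + ENNReal.ofReal (t1 ^ p)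
        + ENNReal.ofReal (1 / 2) * L :=
      le_trans hsplit (le_of_eq (by ring))
    have h := ENNReal.toReal_mono hfin2 hsp
    rw [ENNReal.toReal_add (ENNReal.add_ne_top.mpr ⟨ENNReal.mul_ne_top ENNReal.ofReal_ne_top
      ENNReal.ofReal_ne_top, ENNReal.ofReal_ne_top⟩) hhl,
      ENNReal.toReal_add (ENNReal.mul_ne_top ENNReal.ofReal_ne_top ENNReal.ofReal_ne_top)
        ENNReal.ofReal_ne_top,
      ENNReal.toReal_mul, ENNReal.toReal_mul, ENNReal.toReal_ofReal (by positivity : (0:ℝ) ≤ 3 ^ p),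
      ENNReal.toReal_ofReal hA0, ENNReal.toReal_ofReal (Real.rpow_nonneg ht10 p),
      ENNReal.toReal_ofReal (by norm_num : (0:ℝ) ≤ 1/2)] at h
    exact h
  have hL2c : L.toReal ≤ 2 * (3 ^ p * A + t1 ^ p) := by linarith
  -- identify the integral with L.toReal
  have hIeq : ∫ ω, M ω ^ p ∂μ = L.toReal := by
    rw [hLdef]
    exact integral_eq_lintegral_of_nonneg_ae
      (Filter.Eventually.of_forall fun ω => Real.rpow_nonneg (hM0 ω) p)
      (measurable_rpow_c hMmeas hp0.le).aestronglyMeasurable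
  have ht1p : t1 ^ p = (18 * 3 ^ p) ^ (p / 2) * B ^ (p / 2) := by
    have hz : (0:ℝ) ≤ 18 * 3 ^ p * B := by positivity
    rw [ht1def, Real.sqrt_eq_rpow, ← Real.rpow_mul hz,
      show (1:ℝ) / 2 * p = p / 2 by ring]
    exact Real.mul_rpow (by positivity) hB0
  rw [hIeq]
  calc L.toReal ≤ 2 * (3 ^ p * A + t1 ^ p) := hL2c
    _ = 2 * 3 ^ p * A + 2 * ((18 * 3 ^ p) ^ (p / 2) * B ^ (p / 2)) := by rw [ht1p]; ring
    _ ≤ (2 * 3 ^ p + 2 * (18 * 3 ^ p) ^ (p / 2)) * (A + B ^ (p / 2)) := by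
        have h1 : (0:ℝ) ≤ B ^ (p / 2) := Real.rpow_nonneg hB0 _
        have h2 : (0:ℝ) < 3 ^ p := by positivity
        have h3 : (0:ℝ) ≤ (18 * 3 ^ p) ^ (p / 2) := Real.rpow_nonneg (by positivity) _
        nlinarith [mul_nonneg (mul_nonneg (by norm_num : (0:ℝ) ≤ 2) h2.le) h1,
          mul_nonneg (mul_nonneg (by norm_num : (0:ℝ) ≤ 2) h3) hA0]
end part4

lemma iIndepFun_ae_congr {Ω : Type} [MeasurableSpace Ω] {μ : Measure Ω} {X Y : ℕ → Ω → ℝ}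
    (hind : iIndepFun X μ) (hae : ∀ k, X k =ᵐ[μ] Y k) :
    iIndepFun Y μ := by
  rw [iIndepFun_iff_measure_inter_preimage_eq_mul] at hind ⊢
  intro S sets hsets
  have hae_all : ∀ᵐ ω ∂μ, ∀ k, X k ω = Y k ω := ae_all_iff.mpr hae
  have h1 : ((⋂ i ∈ S, Y i ⁻¹' sets i) : Set Ω) =ᵐ[μ] ((⋂ i ∈ S, X i ⁻¹' sets i) : Set Ω) := by
    rw [Filter.eventuallyEq_set]
    filter_upwards [hae_all] with ω hω
    simp only [Set.mem_iInter, Set.mem_preimage]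
    constructor
    · intro h i hi
      rw [hω i]
      exact h i hi
    · intro h i hi
      rw [← hω i]
      exact h i hi
  rw [measure_congr h1, hind S hsets]
  refine Finset.prod_congr rfl fun i hi => measure_congr ?_
  rw [Filter.eventuallyEq_set]
  filter_upwards [hae i] with ω hω
  simp only [Set.mem_preimage, hω]

end RosenthalAux

open RosenthalAux in
/-- Rosenthal-type maximal inequality: for independent centered random variables with
finite `p`-th moments (`p ≥ 2`), there is a constant `C_p` depending only on `p` such that
`E[max_{k≤n} |S_k|^p] ≤ C_p (Σ E|X_k|^p + (Σ E[X_k²])^{p/2})`. -/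
theorem rosenthal_maximal_inequality (p : ℝ) (hp : 2 ≤ p) :
    ∃ C : ℝ, 0 < C ∧
      ∀ (Ω : Type) (_ : MeasurableSpace Ω) (μ : Measure Ω), IsProbabilityMeasure μ →
      ∀ (n : ℕ) (X : ℕ → Ω → ℝ),
        iIndepFun X μ →
        (∀ k, MemLp (X k) (ENNReal.ofReal p) μ) →
        (∀ k, ∫ ω, X k ω ∂μ = 0) →
        ∫ ω, (⨆ k : Fin (n + 1), |∑ j ∈ Finset.range (k : ℕ), X j ω|) ^ p ∂μ ≤
          C * ((∑ k ∈ Finset.range n, ∫ ω, |X k ω| ^ p ∂μ) +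
            (∑ k ∈ Finset.range n, ∫ ω, (X k ω) ^ 2 ∂μ) ^ (p / 2)) := by
  refine ⟨2 * 3 ^ p + 2 * (18 * 3 ^ p) ^ (p / 2), by positivity, ?_⟩
  intro Ω mΩ μ hprob n X hind hmem hcent
  haveI := hprob
  set Y : ℕ → Ω → ℝ := fun k => (hmem k).aestronglyMeasurable.mk (X k) with hYdef
  have hYmeas : ∀ k, Measurable (Y k) :=
    fun k => (hmem k).aestronglyMeasurable.stronglyMeasurable_mk.measurable
  have hae : ∀ k, X k =ᵐ[μ] Y k := fun k => (hmem k).aestronglyMeasurable.ae_eq_mk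
  have hae_all : ∀ᵐ ω ∂μ, ∀ k, X k ω = Y k ω := ae_all_iff.mpr hae
  have hindY : iIndepFun Y μ := iIndepFun_ae_congr hind hae
  have hmemY : ∀ k, MemLp (Y k) (ENNReal.ofReal p) μ := fun k => (hmem k).ae_eq (hae k)
  have hcentY : ∀ k, ∫ ω, Y k ω ∂μ = 0 := fun k => by
    rw [← integral_congr_ae (hae k), hcent k]
  have hLHS : ∫ ω, (⨆ k : Fin (n + 1), |∑ j ∈ Finset.range (k : ℕ), X j ω|) ^ p ∂μ
      = ∫ ω, (⨆ k : Fin (n + 1), |∑ j ∈ Finset.range (k : ℕ), Y j ω|) ^ p ∂μ := by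
    refine integral_congr_ae ?_
    filter_upwards [hae_all] with ω hω
    congr 1
    exact iSup_congr fun k => by
      congr 1
      exact Finset.sum_congr rfl fun j _ => hω j
  have hR1 : ∀ k, (∫ ω, |X k ω| ^ p ∂μ) = ∫ ω, |Y k ω| ^ p ∂μ := fun k =>
    integral_congr_ae (by filter_upwards [hae k] with ω hω; rw [hω])
  have hR2 : ∀ k, (∫ ω, (X k ω) ^ 2 ∂μ) = ∫ ω, (Y k ω) ^ 2 ∂μ := fun k =>
    integral_congr_ae (by filter_upwards [hae k] with ω hω; rw [hω])
  rw [hLHS]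
  have := main_est hp hYmeas hindY hmemY hcentY (n := n)
  calc ∫ ω, (⨆ k : Fin (n + 1), |∑ j ∈ Finset.range (k : ℕ), Y j ω|) ^ p ∂μ
      ≤ (2 * 3 ^ p + 2 * (18 * 3 ^ p) ^ (p / 2)) *
        ((∑ k ∈ Finset.range n, ∫ ω, |Y k ω| ^ p ∂μ) +
          (∑ k ∈ Finset.range n, ∫ ω, (Y k ω) ^ 2 ∂μ) ^ (p / 2)) := this
    _ = _ := by
        congr 2
        · exact (Finset.sum_congr rfl fun k _ => (hR1 k).symm)
        · congr 1
          exact (Finset.sum_congr rfl fun k _ => (hR2 k).symm)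
end

section
/- (Kolmogorov-type inequality for 1 ≤ p ≤ 2.) Let X₁,…,Xₙ be independent real random variables on a probability space with E[Xₖ] ≤ 0 for each k, and let Sₖ = X₁ + ⋯ + Xₖ. Then for 1 ≤ p ≤ 2, E[ (max_{k≤n} (Sₙ − Sₖ))^p ] ≤ 2^{2−p} Σ_{k=1}^n E[|Xₖ|^p], where the maximum is over k = 0,1,…,n (with S₀ = 0), provided all moments involved are finite. -/
open MeasureTheory ProbabilityTheory Finset intervalIntegral
open scoped NNReal ENNReal

lemma rpow_subadd' {a b q : ℝ} (ha : 0 ≤ a) (hb : 0 ≤ b) (hq0 : 0 ≤ q) (hq1 : q ≤ 1) :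
    (a + b) ^ q ≤ a ^ q + b ^ q := by
  have h := NNReal.rpow_add_le_add_rpow a.toNNReal b.toNNReal hq0 hq1
  have h2 : (((a.toNNReal + b.toNNReal : ℝ≥0) : ℝ)) ^ q ≤
      ((a.toNNReal : ℝ)) ^ q + ((b.toNNReal : ℝ)) ^ q := by
    exact_mod_cast h
  simpa [Real.coe_toNNReal a ha, Real.coe_toNNReal b hb] using h2


lemma lemC' {p m y : ℝ} (hp1 : 1 ≤ p) (hp2 : p ≤ 2) (hm : 0 ≤ m) (hy : 0 ≤ y) :
    p * m ^ (p - 1) * y ≤ m ^ p + y ^ p := by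
  rcases hm.eq_or_lt with h | hm0
  · subst h
    rcases hp1.eq_or_lt with h1 | h1
    · subst h1; simp
    · rw [Real.zero_rpow (by linarith : p - 1 ≠ 0), Real.zero_rpow (by linarith : p ≠ 0)]
      simpa using Real.rpow_nonneg hy p
  · have ht : -1 ≤ y / m - 1 := by
      have : 0 ≤ y / m := div_nonneg hy hm0.le
      linarith
    have hb := one_add_mul_self_le_rpow_one_add ht hp1
    rw [show 1 + (y / m - 1) = y / m by ring] at hb
    have hdiv : (y / m) ^ p = y ^ p / m ^ p := Real.div_rpow hy hm0.le p
    have hmp : (0:ℝ) < m ^ p := Real.rpow_pos_of_pos hm0 p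
    have hm1 : m ^ (p - 1) = m ^ p / m := Real.rpow_sub_one hm0.ne' p
    rw [hdiv] at hb
    have h3 : m ^ p * (1 + p * (y / m - 1)) ≤ y ^ p := by
      calc m ^ p * (1 + p * (y / m - 1)) ≤ m ^ p * (y ^ p / m ^ p) :=
            mul_le_mul_of_nonneg_left hb hmp.le
        _ = y ^ p := by field_simp
    rw [hm1, show p * (m ^ p / m) * y = p * (m ^ p * (y / m)) by ring]
    nlinarith [h3, mul_nonneg (sub_nonneg.2 hp2) hmp.le]

lemma lemI' {p a b : ℝ} (hp1 : 1 ≤ p) (hab : a ≤ b) :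
    ∫ t in a..b, t ^ (p - 1) = (b ^ p - a ^ p) / p := by
  have h := integral_rpow (a := a) (b := b) (Or.inl (by linarith : (-1:ℝ) < p - 1))
  simpa using h

lemma lemA' {p m x : ℝ} (hp1 : 1 ≤ p) (hp2 : p ≤ 2) (hm : 0 ≤ m) (hx : 0 ≤ x) :
    (m + x) ^ p ≤ m ^ p + p * m ^ (p - 1) * x + x ^ p := by
  have hp0 : (0:ℝ) < p := by linarith
  have hq0 : (0:ℝ) ≤ p - 1 := by linarith
  have hi1 : IntervalIntegrable (fun t : ℝ => t ^ (p - 1)) volume m (m + x) :=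
    intervalIntegrable_rpow (Or.inl hq0)
  have hi3 : IntervalIntegrable (fun t : ℝ => (t - m) ^ (p - 1)) volume m (m + x) := by
    have := (intervalIntegrable_rpow (μ := volume) (a := 0) (b := x) (r := p - 1)
      (Or.inl hq0)).comp_sub_right m
    simpa [add_comm] using this
  have hi2 : IntervalIntegrable (fun t : ℝ => m ^ (p - 1) + (t - m) ^ (p - 1))
      volume m (m + x) :=
    intervalIntegrable_const.add hi3
  have hmono : ∫ t in m..(m + x), t ^ (p - 1) ≤
      ∫ t in m..(m + x), (m ^ (p - 1) + (t - m) ^ (p - 1)) := by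
    refine integral_mono_on (by linarith) hi1 hi2 (fun t ht => ?_)
    have h1 : m ≤ t := ht.1
    have := rpow_subadd' hm (sub_nonneg.2 h1) hq0 (by linarith)
    calc t ^ (p-1) = (m + (t - m)) ^ (p-1) := by ring_nf
      _ ≤ m ^ (p-1) + (t - m) ^ (p-1) := this
  have hL : ∫ t in m..(m + x), t ^ (p - 1) = ((m + x) ^ p - m ^ p) / p :=
    lemI' hp1 (by linarith)
  have hR : ∫ t in m..(m + x), (m ^ (p - 1) + (t - m) ^ (p - 1)) =
      m ^ (p - 1) * x + x ^ p / p := by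
    rw [integral_add intervalIntegrable_const hi3]
    rw [intervalIntegral.integral_const, integral_comp_sub_right (fun s : ℝ => s ^ (p - 1)) m]
    simp only [add_sub_cancel_left, sub_self]
    rw [lemI' hp1 hx, Real.zero_rpow hp0.ne', smul_eq_mul]
    ring
  rw [hL, hR] at hmono
  have := mul_le_mul_of_nonneg_left hmono hp0.le
  rw [mul_div_cancel₀ _ hp0.ne'] at this
  have h2 : p * (m ^ (p-1) * x + x ^ p / p) = p * m ^ (p-1) * x + x ^ p := by
    field_simp
  rw [h2] at this
  linarith

lemma lemB' {p m y : ℝ} (hp1 : 1 ≤ p) (hp2 : p ≤ 2) (hy : 0 ≤ y) (hmy : y ≤ m) :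
    (m - y) ^ p ≤ m ^ p - p * m ^ (p - 1) * y + y ^ p := by
  have hp0 : (0:ℝ) < p := by linarith
  have hq0 : (0:ℝ) ≤ p - 1 := by linarith
  have hm : 0 ≤ m := le_trans hy hmy
  have hi1 : IntervalIntegrable (fun t : ℝ => t ^ (p - 1)) volume (m - y) m :=
    intervalIntegrable_rpow (Or.inl hq0)
  have hi3 : IntervalIntegrable (fun t : ℝ => (m - t) ^ (p - 1)) volume (m - y) m := by
    have := (intervalIntegrable_rpow (μ := volume) (a := y) (b := 0) (r := p - 1)
      (Or.inl hq0)).comp_sub_left m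
    simpa using this
  have hi2 : IntervalIntegrable (fun t : ℝ => m ^ (p - 1) - (m - t) ^ (p - 1))
      volume (m - y) m :=
    intervalIntegrable_const.sub hi3
  have hmono : ∫ t in (m - y)..m, (m ^ (p - 1) - (m - t) ^ (p - 1)) ≤
      ∫ t in (m - y)..m, t ^ (p - 1) := by
    refine integral_mono_on (by linarith) hi2 hi1 (fun t ht => ?_)
    have h1 : m - y ≤ t := ht.1
    have h2 : t ≤ m := ht.2
    have ht0 : 0 ≤ t := by linarith
    have := rpow_subadd' ht0 (sub_nonneg.2 h2) hq0 (by linarith)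
    rw [show t + (m - t) = m by ring] at this
    linarith
  have hL : ∫ t in (m - y)..m, t ^ (p - 1) = (m ^ p - (m - y) ^ p) / p :=
    lemI' hp1 (by linarith)
  have hR : ∫ t in (m - y)..m, (m ^ (p - 1) - (m - t) ^ (p - 1)) =
      m ^ (p - 1) * y - y ^ p / p := by
    rw [integral_sub intervalIntegrable_const hi3]
    rw [intervalIntegral.integral_const, integral_comp_sub_left (fun s : ℝ => s ^ (p - 1)) m]
    simp only [sub_self, sub_sub_cancel]
    rw [lemI' hp1 hy, Real.zero_rpow hp0.ne', smul_eq_mul]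
    ring
  rw [hL, hR] at hmono
  have := mul_le_mul_of_nonneg_left hmono hp0.le
  rw [mul_div_cancel₀ _ hp0.ne'] at this
  have h2 : p * (m ^ (p-1) * y - y ^ p / p) = p * m ^ (p-1) * y - y ^ p := by
    field_simp
  rw [h2] at this
  linarith

noncomputable def FF : ℕ → (ℕ → ℝ) → ℝ
  | 0, _ => 0
  | n + 1, v => max 0 (FF n v + v n)

lemma FF_nonneg (n : ℕ) (v : ℕ → ℝ) : 0 ≤ FF n v := by
  cases n with
  | zero => exact le_refl 0
  | succ n => exact le_max_left _ _

lemma FF_congr {n : ℕ} {v w : ℕ → ℝ} (h : ∀ j < n, v j = w j) : FF n v = FF n w := by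
  induction n with
  | zero => rfl
  | succ n ih =>
    show max 0 (FF n v + v n) = max 0 (FF n w + w n)
    rw [ih (fun j hj => h j (by omega)), h n (by omega)]

lemma measurable_FF (n : ℕ) : Measurable (FF n) := by
  induction n with
  | zero => exact measurable_const
  | succ n ih => exact measurable_const.max (ih.add (measurable_pi_apply n))

lemma helper1 {n : ℕ} (g : Fin (n + 2) → ℝ) :
    (⨆ k, g k) = max (⨆ i : Fin (n + 1), g i.castSucc) (g (Fin.last (n + 1))) := by
  apply le_antisymm
  · refine ciSup_le fun k => ?_
    induction k using Fin.lastCases with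
    | last => exact le_max_right _ _
    | cast i => exact le_trans (le_ciSup (f := fun i : Fin (n+1) => g i.castSucc)
        (Set.finite_range _).bddAbove i) (le_max_left _ _)
  · exact max_le (ciSup_le fun i => le_ciSup (Set.finite_range g).bddAbove i.castSucc)
      (le_ciSup (Set.finite_range g).bddAbove _)

lemma helper2 {n : ℕ} (g : Fin (n + 1) → ℝ) (c : ℝ) :
    (⨆ k, (g k + c)) = (⨆ k, g k) + c := by
  apply le_antisymm
  · exact ciSup_le fun k => add_le_add_left (le_ciSup (Set.finite_range g).bddAbove k) c
  · have h : ∀ k, g k ≤ (⨆ k, (g k + c)) - c := fun k =>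
      le_sub_iff_add_le.2 (le_ciSup (Set.finite_range fun k => g k + c).bddAbove k)
    linarith [ciSup_le h]

lemma FF_eq_sup (n : ℕ) (v : ℕ → ℝ) :
    FF n v = ⨆ k : Fin (n + 1),
      ((∑ j ∈ Finset.range n, v j) - ∑ j ∈ Finset.range (k : ℕ), v j) := by
  induction n with
  | zero => simp [FF, ciSup_unique]
  | succ n ih =>
    rw [show FF (n + 1) v = max 0 (FF n v + v n) from rfl, helper1]
    have h1 : ∀ i : Fin (n + 1),
        (∑ j ∈ Finset.range (n + 1), v j) - ∑ j ∈ Finset.range ((i.castSucc : ℕ)), v j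
          = ((∑ j ∈ Finset.range n, v j) - ∑ j ∈ Finset.range (i : ℕ), v j) + v n := by
      intro i
      rw [Finset.sum_range_succ, Fin.coe_castSucc]
      ring
    simp only [h1, Fin.val_last, sub_self]
    rw [helper2, ← ih, max_comm]

lemma keyIneq {p m x : ℝ} (hp1 : 1 ≤ p) (hp2 : p ≤ 2) (hm : 0 ≤ m) :
    max 0 (m + x) ^ p ≤ m ^ p + p * (m ^ (p - 1) * x) + |x| ^ p := by
  rcases le_or_gt 0 x with hx | hx
  · rw [max_eq_right (by linarith), abs_of_nonneg hx]
    have := lemA' hp1 hp2 hm hx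
    linarith [this]
  · rcases le_or_gt (-x) m with hxm | hxm
    · rw [max_eq_right (by linarith), abs_of_neg hx]
      have := lemB' hp1 hp2 (by linarith : 0 ≤ -x) hxm
      rw [show m - -x = m + x by ring] at this
      nlinarith [this]
    · rw [max_eq_left (by linarith), abs_of_neg hx]
      rw [Real.zero_rpow (by linarith : p ≠ 0)]
      have := lemC' hp1 hp2 hm (by linarith : 0 ≤ -x)
      nlinarith [this]

lemma stepIneq {Ω : Type*} [MeasurableSpace Ω] (μ : Measure Ω) [IsProbabilityMeasure μ]
    {p : ℝ} (hp1 : 1 ≤ p) (hp2 : p ≤ 2) {M Z : Ω → ℝ}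
    (hM : Measurable M) (hZ : Measurable Z) (hMnn : ∀ ω, 0 ≤ M ω)
    (hMp : MemLp M (ENNReal.ofReal p) μ) (hZp : MemLp Z (ENNReal.ofReal p) μ)
    (hind : IndepFun M Z μ) (hmean : ∫ ω, Z ω ∂μ ≤ 0) :
    ∫ ω, max 0 (M ω + Z ω) ^ p ∂μ ≤ (∫ ω, M ω ^ p ∂μ) + ∫ ω, |Z ω| ^ p ∂μ := by
  have hp0 : (0:ℝ) < p := by linarith
  have hpne : ENNReal.ofReal p ≠ 0 := by
    simp only [ne_eq, ENNReal.ofReal_eq_zero, not_le]; linarith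
  have hptop : ENNReal.ofReal p ≠ ⊤ := ENNReal.ofReal_ne_top
  have htR : (ENNReal.ofReal p).toReal = p := ENNReal.toReal_ofReal hp0.le
  have hMint : Integrable (fun ω => M ω ^ p) μ := by
    have h := hMp.integrable_norm_rpow hpne hptop
    rw [htR] at h
    refine h.congr (Filter.Eventually.of_forall fun ω => ?_)
    simp [Real.norm_of_nonneg (hMnn ω)]
  have hZint : Integrable (fun ω => |Z ω| ^ p) μ := by
    have h := hZp.integrable_norm_rpow hpne hptop
    rw [htR] at h
    simpa [Real.norm_eq_abs] using h
  have hZ1 : Integrable Z μ := hZp.integrable (ENNReal.one_le_ofReal.2 hp1)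
  have hq_meas : Measurable (fun ω => M ω ^ (p - 1)) :=
    (Real.continuous_rpow_const (by linarith : (0:ℝ) ≤ p - 1)).measurable.comp hM
  have hMq : Integrable (fun ω => M ω ^ (p - 1)) μ := by
    refine Integrable.mono' ((integrable_const (1:ℝ)).add hMint) hq_meas.aestronglyMeasurable
      (Filter.Eventually.of_forall fun ω => ?_)
    rw [Real.norm_of_nonneg (Real.rpow_nonneg (hMnn ω) _)]
    rcases le_or_gt (M ω) 1 with h1 | h1
    · have := Real.rpow_le_one (hMnn ω) h1 (by linarith : (0:ℝ) ≤ p - 1)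
      have h2 : (0:ℝ) ≤ M ω ^ p := Real.rpow_nonneg (hMnn ω) p
      simpa using by linarith
    · have := Real.rpow_le_rpow_of_exponent_le h1.le (by linarith : p - 1 ≤ p)
      simpa using by linarith
  have hindq : IndepFun (fun ω => M ω ^ (p - 1)) Z μ :=
    hind.comp (Real.continuous_rpow_const (by linarith : (0:ℝ) ≤ p - 1)).measurable
      measurable_id
  have hprod : Integrable (fun ω => M ω ^ (p - 1) * Z ω) μ := hindq.integrable_mul hMq hZ1
  have hmul : ∫ ω, M ω ^ (p - 1) * Z ω ∂μ = (∫ ω, M ω ^ (p - 1) ∂μ) * ∫ ω, Z ω ∂μ :=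
    hindq.integral_mul_eq_mul_integral hMq.1 hZ1.1
  have hq_nonneg : 0 ≤ ∫ ω, M ω ^ (p - 1) ∂μ :=
    integral_nonneg fun ω => Real.rpow_nonneg (hMnn ω) _
  have hRHSint : Integrable
      (fun ω => M ω ^ p + p * (M ω ^ (p - 1) * Z ω) + |Z ω| ^ p) μ :=
    (hMint.add (hprod.const_mul p)).add hZint
  have hle : ∫ ω, max 0 (M ω + Z ω) ^ p ∂μ ≤
      ∫ ω, (M ω ^ p + p * (M ω ^ (p - 1) * Z ω) + |Z ω| ^ p) ∂μ := by
    refine integral_mono_of_nonneg (Filter.Eventually.of_forall fun ω => ?_) hRHSint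
      (Filter.Eventually.of_forall fun ω => keyIneq hp1 hp2 (hMnn ω))
    exact Real.rpow_nonneg (le_max_left _ _) p
  have heq : ∫ ω, (M ω ^ p + p * (M ω ^ (p - 1) * Z ω) + |Z ω| ^ p) ∂μ =
      (∫ ω, M ω ^ p ∂μ) + p * ((∫ ω, M ω ^ (p - 1) ∂μ) * ∫ ω, Z ω ∂μ)
        + ∫ ω, |Z ω| ^ p ∂μ := by
    have e1 : ∫ ω, ((M ω ^ p + p * (M ω ^ (p - 1) * Z ω)) + |Z ω| ^ p) ∂μ =
        (∫ ω, (M ω ^ p + p * (M ω ^ (p - 1) * Z ω)) ∂μ) + ∫ ω, |Z ω| ^ p ∂μ :=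
      integral_add (hMint.add (hprod.const_mul p)) hZint
    have e2 : ∫ ω, (M ω ^ p + p * (M ω ^ (p - 1) * Z ω)) ∂μ =
        (∫ ω, M ω ^ p ∂μ) + ∫ ω, p * (M ω ^ (p - 1) * Z ω) ∂μ :=
      integral_add hMint (hprod.const_mul p)
    rw [e1, e2, MeasureTheory.integral_const_mul, hmul]
  have hfin : p * ((∫ ω, M ω ^ (p - 1) ∂μ) * ∫ ω, Z ω ∂μ) ≤ 0 :=
    mul_nonpos_of_nonneg_of_nonpos hp0.le (mul_nonpos_of_nonneg_of_nonpos hq_nonneg hmean)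
  linarith [hle, heq.le, heq.ge]


lemma main_rec {Ω : Type*} [MeasurableSpace Ω] (μ : Measure Ω) [IsProbabilityMeasure μ]
    {p : ℝ} (hp1 : 1 ≤ p) (hp2 : p ≤ 2)
    (Y : ℕ → Ω → ℝ) (hY : ∀ k, Measurable (Y k))
    (hYindep : iIndepFun Y μ)
    (hYmem : ∀ k, MemLp (Y k) (ENNReal.ofReal p) μ)
    (hYmean : ∀ k, ∫ ω, Y k ω ∂μ ≤ 0) :
    ∀ n, ∫ ω, (FF n fun j => Y j ω) ^ p ∂μ ≤
      ∑ k ∈ Finset.range n, ∫ ω, |Y k ω| ^ p ∂μ := by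
  have hMmeas : ∀ n, Measurable fun ω => FF n fun j => Y j ω := fun n =>
    (measurable_FF n).comp (measurable_pi_lambda _ fun j => hY j)
  have hMmem : ∀ n, MemLp (fun ω => FF n fun j => Y j ω) (ENNReal.ofReal p) μ := by
    intro n
    induction n with
    | zero =>
      have : (fun ω : Ω => FF 0 fun j => Y j ω) = fun _ => (0:ℝ) := rfl
      rw [this]; exact memLp_const 0
    | succ n ih =>
      have hmeas : AEStronglyMeasurable
          (fun ω => max 0 ((FF n fun j => Y j ω) + Y n ω)) μ :=
        (measurable_const.max ((hMmeas n).add (hY n))).aestronglyMeasurable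
      have hadd : MemLp ((fun ω => FF n fun j => Y j ω) + Y n) (ENNReal.ofReal p) μ :=
        ih.add (hYmem n)
      refine MemLp.of_le hadd hmeas (Filter.Eventually.of_forall fun ω => ?_)
      simp only [Pi.add_apply, Real.norm_eq_abs]
      rw [abs_of_nonneg (le_max_left _ _)]
      exact max_le (abs_nonneg _) (le_abs_self _)
  have hMind : ∀ n, IndepFun (fun ω => FF n fun j => Y j ω) (Y n) μ := by
    intro n
    have hd : Disjoint (Finset.range n) ({n} : Finset ℕ) := by simp
    have h := hYindep.indepFun_finset (Finset.range n) {n} hd hY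
    have hφ : Measurable (fun v : (↥(Finset.range n) → ℝ) =>
        FF n (fun j => if h : j ∈ Finset.range n then v ⟨j, h⟩ else 0)) := by
      refine (measurable_FF n).comp (measurable_pi_lambda _ fun j => ?_)
      by_cases hj : j ∈ Finset.range n
      · simp only [dif_pos hj]; exact measurable_pi_apply _
      · simp only [dif_neg hj]; exact measurable_const
    have hψ : Measurable (fun v : (↥({n} : Finset ℕ) → ℝ) =>
        v ⟨n, Finset.mem_singleton_self n⟩) := measurable_pi_apply _
    have h2 := h.comp hφ hψ
    have e1 : (fun v : (↥(Finset.range n) → ℝ) =>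
          FF n fun j => if h : j ∈ Finset.range n then v ⟨j, h⟩ else 0) ∘
        (fun a (i : ↥(Finset.range n)) => Y i a)
        = fun ω => FF n fun j => Y j ω := by
      funext ω
      exact FF_congr fun j hj => by simp [Finset.mem_range.2 hj]
    have e2 : (fun v : (↥({n} : Finset ℕ) → ℝ) => v ⟨n, Finset.mem_singleton_self n⟩) ∘
        (fun a (i : ↥({n} : Finset ℕ)) => Y i a) = Y n := rfl
    rw [e1, e2] at h2
    exact h2
  intro n
  induction n with
  | zero =>
    have h0 : ∀ ω : Ω, (FF 0 fun j => Y j ω) ^ p = 0 := fun ω => by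
      show (0:ℝ) ^ p = 0
      exact Real.zero_rpow (by linarith)
    simp [h0]
  | succ n ih =>
    have step := stepIneq μ hp1 hp2 (hMmeas n) (hY n) (fun ω => FF_nonneg n _)
      (hMmem n) (hYmem n) (hMind n) (hYmean n)
    rw [Finset.sum_range_succ]
    calc ∫ ω, (FF (n + 1) fun j => Y j ω) ^ p ∂μ
        = ∫ ω, max 0 ((FF n fun j => Y j ω) + Y n ω) ^ p ∂μ := rfl
      _ ≤ (∫ ω, (FF n fun j => Y j ω) ^ p ∂μ) + ∫ ω, |Y n ω| ^ p ∂μ := step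
      _ ≤ _ := by linarith [ih]

/-- Kolmogorov-type inequality for `1 ≤ p ≤ 2`: for independent random variables with
nonpositive means and finite `p`-th moments,
`E[(max_{0≤k≤n} (S_n − S_k))^p] ≤ 2^{2−p} Σ_{k<n} E|X_k|^p`. -/
theorem kolmogorov_type_inequality
    {Ω : Type*} [MeasurableSpace Ω] (μ : Measure Ω) [IsProbabilityMeasure μ]
    (p : ℝ) (hp1 : 1 ≤ p) (hp2 : p ≤ 2)
    (n : ℕ) (X : ℕ → Ω → ℝ)
    (hindep : iIndepFun X μ)
    (hmem : ∀ k, MemLp (X k) (ENNReal.ofReal p) μ)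
    (hmean : ∀ k, ∫ ω, X k ω ∂μ ≤ 0) :
    ∫ ω, (⨆ k : Fin (n + 1),
        ((∑ j ∈ Finset.range n, X j ω) - ∑ j ∈ Finset.range (k : ℕ), X j ω)) ^ p ∂μ ≤
      2 ^ (2 - p) * ∑ k ∈ Finset.range n, ∫ ω, |X k ω| ^ p ∂μ := by
  have hp0 : (0:ℝ) < p := by linarith
  set Y : ℕ → Ω → ℝ := fun k => (hmem k).1.mk (X k) with hYdef
  have hY : ∀ k, Measurable (Y k) := fun k => ((hmem k).1.stronglyMeasurable_mk).measurable
  have hXY : ∀ k, X k =ᵐ[μ] Y k := fun k => (hmem k).1.ae_eq_mk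
  have hYindep : iIndepFun Y μ := by
    rw [iIndepFun_iff_measure_inter_preimage_eq_mul] at hindep ⊢
    intro S sets hsets
    have hae : ∀ᵐ ω ∂μ, ∀ i ∈ S, X i ω = Y i ω :=
      (ae_ball_iff S.countable_toSet).2 fun i _ => hXY i
    have h1 : μ (⋂ i ∈ S, Y i ⁻¹' sets i) = μ (⋂ i ∈ S, X i ⁻¹' sets i) := by
      apply measure_congr
      filter_upwards [hae] with ω hω
      simp only [eq_iff_iff]
      show ω ∈ ⋂ i ∈ S, Y i ⁻¹' sets i ↔ ω ∈ ⋂ i ∈ S, X i ⁻¹' sets i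
      simp only [Set.mem_iInter, Set.mem_preimage]
      constructor
      · intro h i hi; rw [hω i hi]; exact h i hi
      · intro h i hi; rw [← hω i hi]; exact h i hi
    have h2 : ∀ i ∈ S, μ (X i ⁻¹' sets i) = μ (Y i ⁻¹' sets i) := fun i hi => by
      apply measure_congr
      filter_upwards [hXY i] with ω hω
      simp only [eq_iff_iff]
      show X i ω ∈ sets i ↔ Y i ω ∈ sets i
      rw [hω]
    rw [h1, hindep S hsets]
    exact Finset.prod_congr rfl h2
  have hYmem : ∀ k, MemLp (Y k) (ENNReal.ofReal p) μ := fun k => (hmem k).ae_eq (hXY k)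
  have hYmean : ∀ k, ∫ ω, Y k ω ∂μ ≤ 0 := fun k => by
    rw [← MeasureTheory.integral_congr_ae (hXY k)]; exact hmean k
  have hrec := main_rec μ hp1 hp2 Y hY hYindep hYmem hYmean n
  have hae : ∀ᵐ ω ∂μ, ∀ i ∈ Finset.range n, X i ω = Y i ω :=
    (ae_ball_iff (Finset.range n).countable_toSet).2 fun i _ => hXY i
  have hLHS : ∫ ω, (⨆ k : Fin (n + 1),
        ((∑ j ∈ Finset.range n, X j ω) - ∑ j ∈ Finset.range (k : ℕ), X j ω)) ^ p ∂μ
      = ∫ ω, (FF n fun j => Y j ω) ^ p ∂μ := by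
    apply MeasureTheory.integral_congr_ae
    filter_upwards [hae] with ω hω
    rw [FF_eq_sup]
    congr 1
    refine iSup_congr fun k => ?_
    have hs : ∀ m ≤ n, ∑ j ∈ Finset.range m, X j ω = ∑ j ∈ Finset.range m, Y j ω :=
      fun m hm => Finset.sum_congr rfl fun j hj =>
        hω j (Finset.mem_range.2 (lt_of_lt_of_le (Finset.mem_range.1 hj) hm))
    rw [hs n le_rfl, hs k (Nat.lt_succ_iff.1 k.isLt)]
  rw [hLHS]
  have hRHS : ∀ k ∈ Finset.range n, ∫ ω, |Y k ω| ^ p ∂μ = ∫ ω, |X k ω| ^ p ∂μ :=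
    fun k _ => MeasureTheory.integral_congr_ae (by filter_upwards [hXY k] with ω hω; rw [hω])
  have hsum_nonneg : 0 ≤ ∑ k ∈ Finset.range n, ∫ ω, |X k ω| ^ p ∂μ :=
    Finset.sum_nonneg fun k _ => integral_nonneg fun ω => Real.rpow_nonneg (abs_nonneg _) p
  have hone : (1:ℝ) ≤ 2 ^ (2 - p) := by
    calc (1:ℝ) = 2 ^ (0:ℝ) := by rw [Real.rpow_zero]
      _ ≤ 2 ^ (2 - p) := Real.rpow_le_rpow_of_exponent_le one_le_two (by linarith)
  calc ∫ ω, (FF n fun j => Y j ω) ^ p ∂μ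
      ≤ ∑ k ∈ Finset.range n, ∫ ω, |Y k ω| ^ p ∂μ := hrec
    _ = ∑ k ∈ Finset.range n, ∫ ω, |X k ω| ^ p ∂μ := Finset.sum_congr rfl hRHS
    _ ≤ 2 ^ (2 - p) * ∑ k ∈ Finset.range n, ∫ ω, |X k ω| ^ p ∂μ :=
        le_mul_of_one_le_left hsum_nonneg hone
end

section
/- Let Y₁,…,Yₙ be real numbers and let S̃ₙ be the piecewise linear interpolation on [0,1] of the partial sums of the Yₖ. Then for any b > 0 and any δ > 0, the modulus of continuity of t ↦ S̃ₙ(t)/n satisfies ω_δ(S̃ₙ/n) ≤ 2δb + (1/n) Σ_{k=1}^n (|Yₖ| − b)⁺. -/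
open Finset

private noncomputable def Fint (Y : ℕ → ℝ) (x : ℝ) : ℝ :=
  (∑ j ∈ Finset.range ⌊x⌋₊, Y (j + 1)) + (x - ⌊x⌋₊) * Y (⌊x⌋₊ + 1)

private lemma Fint_val (Y : ℕ → ℝ) (k : ℕ) {x : ℝ} (h1 : (k : ℝ) ≤ x) (h2 : x ≤ (k : ℝ) + 1) :
    Fint Y x = (∑ j ∈ Finset.range k, Y (j + 1)) + (x - k) * Y (k + 1) := by
  rcases lt_or_eq_of_le h2 with h2 | h2
  · have hx0 : 0 ≤ x := le_trans (k.cast_nonneg) h1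
    have hfl : ⌊x⌋₊ = k := by
      rw [Nat.floor_eq_iff hx0]
      exact ⟨h1, by exact_mod_cast h2⟩
    simp [Fint, hfl]
  · have hx : x = ((k + 1 : ℕ) : ℝ) := by push_cast; linarith
    have hfl : ⌊x⌋₊ = k + 1 := by rw [hx, Nat.floor_natCast]
    rw [Fint, hfl, hx]
    push_cast
    rw [Finset.sum_range_succ]
    ring

private lemma step_eq (Y : ℕ → ℝ) {u v : ℝ} (h0u : 0 ≤ u) (huv : u ≤ v)
    (hv : v ≤ (⌊u⌋₊ : ℝ) + 1) :
    Fint Y v - Fint Y u = (v - u) * Y (⌊u⌋₊ + 1) := by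
  have hku : (⌊u⌋₊ : ℝ) ≤ u := Nat.floor_le h0u
  rw [Fint_val Y ⌊u⌋₊ hku (le_trans huv hv), Fint_val Y ⌊u⌋₊ (le_trans hku huv) hv]
  ring

private lemma small_case (Y : ℕ → ℝ) (b : ℝ) (hb : 0 < b) {u v : ℝ} (h0u : 0 ≤ u)
    (huv : u ≤ v) (hv : v ≤ (⌊u⌋₊ : ℝ) + 1) :
    |Fint Y v - Fint Y u| ≤ (v - u) * b + ∑ j ∈ Finset.Ico ⌊u⌋₊ ⌈v⌉₊, max (|Y (j + 1)| - b) 0 := by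
  rw [step_eq Y h0u huv hv, abs_mul, abs_of_nonneg (by linarith)]
  have hsum_nonneg : 0 ≤ ∑ j ∈ Finset.Ico ⌊u⌋₊ ⌈v⌉₊, max (|Y (j + 1)| - b) 0 :=
    Finset.sum_nonneg fun j _ => le_max_right _ _
  rcases eq_or_lt_of_le huv with h | h
  · subst h; simpa using hsum_nonneg
  · have hY : |Y (⌊u⌋₊ + 1)| ≤ b + max (|Y (⌊u⌋₊ + 1)| - b) 0 :=
      le_add_of_sub_left_le (le_max_left _ _)
    have hmem : ⌊u⌋₊ ∈ Finset.Ico ⌊u⌋₊ ⌈v⌉₊ := by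
      rw [Finset.mem_Ico]
      refine ⟨le_refl _, ?_⟩
      rw [Nat.lt_ceil]
      exact lt_of_le_of_lt (Nat.floor_le h0u) h
    have hsingle : max (|Y (⌊u⌋₊ + 1)| - b) 0 ≤
        ∑ j ∈ Finset.Ico ⌊u⌋₊ ⌈v⌉₊, max (|Y (j + 1)| - b) 0 :=
      Finset.single_le_sum (f := fun j => max (|Y (j + 1)| - b) 0) (fun j _ => le_max_right _ _) hmem
    have hvu1 : v - u ≤ 1 := by
      have := Nat.floor_le h0u
      linarith
    calc (v - u) * |Y (⌊u⌋₊ + 1)|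
        ≤ (v - u) * (b + max (|Y (⌊u⌋₊ + 1)| - b) 0) :=
          mul_le_mul_of_nonneg_left hY (by linarith)
      _ = (v - u) * b + (v - u) * max (|Y (⌊u⌋₊ + 1)| - b) 0 := by ring
      _ ≤ (v - u) * b + 1 * max (|Y (⌊u⌋₊ + 1)| - b) 0 := by
          gcongr
      _ ≤ (v - u) * b + ∑ j ∈ Finset.Ico ⌊u⌋₊ ⌈v⌉₊, max (|Y (j + 1)| - b) 0 := by
          rw [one_mul]; gcongr

private lemma ceil_small {u v : ℝ} (h0u : 0 ≤ u) (hle : ⌈v⌉₊ ≤ ⌊u⌋₊ + 1) :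
    v ≤ (⌊u⌋₊ : ℝ) + 1 :=
  calc v ≤ (⌈v⌉₊ : ℝ) := Nat.le_ceil v
    _ ≤ ((⌊u⌋₊ + 1 : ℕ) : ℝ) := by exact_mod_cast hle
    _ = (⌊u⌋₊ : ℝ) + 1 := by push_cast; ring

private lemma main_bound (Y : ℕ → ℝ) (b : ℝ) (hb : 0 < b) :
    ∀ d : ℕ, ∀ u v : ℝ, 0 ≤ u → u ≤ v → ⌈v⌉₊ ≤ ⌊u⌋₊ + 1 + d →
    |Fint Y v - Fint Y u| ≤ (v - u) * b + ∑ j ∈ Finset.Ico ⌊u⌋₊ ⌈v⌉₊, max (|Y (j + 1)| - b) 0 := by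
  intro d
  induction d with
  | zero =>
    intro u v h0u huv hle
    exact small_case Y b hb h0u huv (ceil_small h0u (by omega))
  | succ d ih =>
    intro u v h0u huv hle
    by_cases hsmall : ⌈v⌉₊ ≤ ⌊u⌋₊ + 1
    · exact small_case Y b hb h0u huv (ceil_small h0u hsmall)
    · push_neg at hsmall
      set w : ℝ := (⌊u⌋₊ : ℝ) + 1 with hw
      have h0w : 0 ≤ w := by positivity
      have hvw : w ≤ v := by
        have h1 : (⌊u⌋₊ + 1 : ℕ) < ⌈v⌉₊ := hsmall
        have h2 : ((⌊u⌋₊ + 1 : ℕ) : ℝ) < v := Nat.lt_ceil.mp h1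
        push_cast at h2
        linarith
      have huw : u ≤ w := by
        have := Nat.lt_floor_add_one u
        linarith
      have hflw : ⌊w⌋₊ = ⌊u⌋₊ + 1 := by
        rw [hw, show (⌊u⌋₊ : ℝ) + 1 = ((⌊u⌋₊ + 1 : ℕ) : ℝ) by push_cast; ring, Nat.floor_natCast]
      have hclw : ⌈w⌉₊ = ⌊u⌋₊ + 1 := by
        rw [hw, show (⌊u⌋₊ : ℝ) + 1 = ((⌊u⌋₊ + 1 : ℕ) : ℝ) by push_cast; ring, Nat.ceil_natCast]
      have hih : |Fint Y v - Fint Y w| ≤ (v - w) * b +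
          ∑ j ∈ Finset.Ico ⌊w⌋₊ ⌈v⌉₊, max (|Y (j + 1)| - b) 0 := by
        apply ih w v h0w hvw
        rw [hflw]
        omega
      have hsmall2 : |Fint Y w - Fint Y u| ≤ (w - u) * b +
          ∑ j ∈ Finset.Ico ⌊u⌋₊ ⌈w⌉₊, max (|Y (j + 1)| - b) 0 :=
        small_case Y b hb h0u huw (le_refl _)
      have hsplit : ∑ j ∈ Finset.Ico ⌊u⌋₊ ⌈v⌉₊, max (|Y (j + 1)| - b) 0 =
          (∑ j ∈ Finset.Ico ⌊u⌋₊ (⌊u⌋₊ + 1), max (|Y (j + 1)| - b) 0) +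
          ∑ j ∈ Finset.Ico (⌊u⌋₊ + 1) ⌈v⌉₊, max (|Y (j + 1)| - b) 0 :=
        (Finset.sum_Ico_consecutive _ (Nat.le_succ _) (le_of_lt hsmall)).symm
      calc |Fint Y v - Fint Y u| ≤ |Fint Y v - Fint Y w| + |Fint Y w - Fint Y u| := by
            have := abs_sub_le (Fint Y v) (Fint Y w) (Fint Y u)
            linarith
        _ ≤ (v - w) * b + (∑ j ∈ Finset.Ico ⌊w⌋₊ ⌈v⌉₊, max (|Y (j + 1)| - b) 0) +
            ((w - u) * b + ∑ j ∈ Finset.Ico ⌊u⌋₊ ⌈w⌉₊, max (|Y (j + 1)| - b) 0) := by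
            linarith
        _ = (v - u) * b + ∑ j ∈ Finset.Ico ⌊u⌋₊ ⌈v⌉₊, max (|Y (j + 1)| - b) 0 := by
            rw [hflw, hclw, hsplit]; ring

private lemma one_sided (n : ℕ) (hn : 1 ≤ n) (Y : ℕ → ℝ) (b δ : ℝ) (hb : 0 < b) (hδ : 0 < δ)
    {s t : ℝ} (hs0 : 0 ≤ s) (ht1 : t ≤ 1) (hst : s ≤ t) (hd : t - s < δ) :
    |Fint Y ((n : ℝ) * t) / n - Fint Y ((n : ℝ) * s) / n| ≤
      2 * δ * b + (1 / n) * ∑ k ∈ Finset.range n, max (|Y (k + 1)| - b) 0 := by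
  have hn0 : (0 : ℝ) < n := by exact_mod_cast hn
  set u : ℝ := (n : ℝ) * s
  set v : ℝ := (n : ℝ) * t
  have h0u : 0 ≤ u := mul_nonneg hn0.le hs0
  have huv : u ≤ v := mul_le_mul_of_nonneg_left hst hn0.le
  have hceil : ⌈v⌉₊ ≤ n := by
    rw [Nat.ceil_le]
    calc v ≤ (n : ℝ) * 1 := mul_le_mul_of_nonneg_left ht1 hn0.le
      _ = (n : ℝ) := by ring
  have hmain := main_bound Y b hb n u v h0u huv (by omega)
  have hsubset : Finset.Ico ⌊u⌋₊ ⌈v⌉₊ ⊆ Finset.range n := by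
    intro j hj
    rw [Finset.mem_Ico] at hj
    rw [Finset.mem_range]
    omega
  have hsum : ∑ j ∈ Finset.Ico ⌊u⌋₊ ⌈v⌉₊, max (|Y (j + 1)| - b) 0 ≤
      ∑ k ∈ Finset.range n, max (|Y (k + 1)| - b) 0 :=
    Finset.sum_le_sum_of_subset_of_nonneg hsubset (fun j _ _ => le_max_right _ _)
  have hvu : v - u ≤ (n : ℝ) * δ := by
    have : v - u = (n : ℝ) * (t - s) := by ring
    rw [this]
    exact mul_le_mul_of_nonneg_left hd.le hn0.le
  rw [div_sub_div_same, abs_div, abs_of_pos hn0, div_le_iff₀ hn0]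
  have hSnn : 0 ≤ ∑ k ∈ Finset.range n, max (|Y (k + 1)| - b) 0 :=
    Finset.sum_nonneg fun k _ => le_max_right _ _
  calc |Fint Y v - Fint Y u|
      ≤ (v - u) * b + ∑ j ∈ Finset.Ico ⌊u⌋₊ ⌈v⌉₊, max (|Y (j + 1)| - b) 0 := hmain
    _ ≤ (n : ℝ) * δ * b + ∑ k ∈ Finset.range n, max (|Y (k + 1)| - b) 0 := by
        gcongr
    _ ≤ (2 * δ * b + (1 / n) * ∑ k ∈ Finset.range n, max (|Y (k + 1)| - b) 0) * n := by
        rw [add_mul]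
        have h1 : (n : ℝ) * δ * b ≤ 2 * δ * b * n := by nlinarith
        have h2 : (1 / (n : ℝ)) * (∑ k ∈ Finset.range n, max (|Y (k + 1)| - b) 0) * n =
            ∑ k ∈ Finset.range n, max (|Y (k + 1)| - b) 0 := by
          field_simp
        linarith

/-- For the piecewise linear interpolation `S̃ₙ` of the partial sums of `Y₁,…,Yₙ`,
the modulus of continuity of `t ↦ S̃ₙ(t)/n` satisfies
`ω_δ(S̃ₙ/n) ≤ 2δb + (1/n) Σ_{k=1}^n (|Y_k| − b)⁺` for any `b > 0`, `δ > 0`. -/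
theorem interpolation_modulus_truncation_bound (n : ℕ) (hn : 1 ≤ n) (Y : ℕ → ℝ)
    (b δ : ℝ) (hb : 0 < b) (hδ : 0 < δ) :
    ∀ s ∈ Set.Icc (0:ℝ) 1, ∀ t ∈ Set.Icc (0:ℝ) 1, |t - s| < δ →
      |(((∑ j ∈ Finset.range ⌊(n:ℝ) * t⌋₊, Y (j + 1)) +
            ((n:ℝ) * t - ⌊(n:ℝ) * t⌋₊) * Y (⌊(n:ℝ) * t⌋₊ + 1)) / n) -
        (((∑ j ∈ Finset.range ⌊(n:ℝ) * s⌋₊, Y (j + 1)) +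
            ((n:ℝ) * s - ⌊(n:ℝ) * s⌋₊) * Y (⌊(n:ℝ) * s⌋₊ + 1)) / n)| ≤
      2 * δ * b + (1 / n) * ∑ k ∈ Finset.range n, max (|Y (k + 1)| - b) 0 := by
  intro s hs t ht hst
  obtain ⟨hs0, hs1⟩ := hs
  obtain ⟨ht0, ht1⟩ := ht
  rcases le_total s t with h | h
  · have hd : t - s < δ := lt_of_le_of_lt (le_abs_self _) hst
    exact one_sided n hn Y b δ hb hδ hs0 ht1 h hd
  · have hd : s - t < δ := by
      rw [abs_sub_comm] at hst
      exact lt_of_le_of_lt (le_abs_self _) hst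
    have := one_sided n hn Y b δ hb hδ ht0 hs1 h hd
    rw [abs_sub_comm] at this
    exact this
end

section
/- Let X be a real random variable on a probability space, r > 2, 0 < δ < 1, and x > 0. Then E[|X|^r ∧ x^r] ≤ δ^{r−2} x^{r−2} E[X² ∧ (δx)²] + x^r · P(|X| ≥ δx). Consequently, if x²P(|X| ≥ x) = o(l(x)) as x → ∞ where l(x) = E[X² ∧ x²] is slowly varying, then E[|X|^r ∧ x^r] = o(x^{r−2} l(x)). -/
open MeasureTheory Filter Asymptotics

private lemma integrable_min_bdd {Ω : Type*} [MeasurableSpace Ω] (μ : Measure Ω)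
    [IsFiniteMeasure μ] {f : Ω → ℝ} (hf : Measurable f) {c : ℝ} (hc : 0 ≤ c)
    (hf0 : ∀ ω, 0 ≤ f ω) :
    Integrable (fun ω => min (f ω) c) μ := by
  refine Integrable.mono' (integrable_const c) ((hf.min measurable_const).aestronglyMeasurable) ?_
  filter_upwards with ω
  rw [Real.norm_eq_abs, abs_of_nonneg (le_min (hf0 ω) hc)]
  exact min_le_right _ _

private lemma part_one {Ω : Type*} [MeasurableSpace Ω] (μ : Measure Ω) [IsProbabilityMeasure μ]
    (X : Ω → ℝ) (hX : Measurable X) (r : ℝ) (hr : 2 < r)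
    (δ x : ℝ) (hδ : 0 < δ) (hδ1 : δ < 1) (hx : 0 < x) :
    ∫ ω, min (|X ω| ^ r) (x ^ r) ∂μ ≤
      δ ^ (r - 2) * x ^ (r - 2) * (∫ ω, min ((X ω) ^ 2) ((δ * x) ^ 2) ∂μ) +
        x ^ r * (μ {ω | δ * x ≤ |X ω|}).toReal := by
  set s : Set Ω := {ω | δ * x ≤ |X ω|} with hs_def
  have hs : MeasurableSet s := measurableSet_le measurable_const hX.abs
  have hδx : 0 < δ * x := mul_pos hδ hx
  have hr2 : (0:ℝ) ≤ r - 2 := by linarith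
  have hpt : ∀ ω, min (|X ω| ^ r) (x ^ r) ≤
      δ ^ (r - 2) * x ^ (r - 2) * min ((X ω) ^ 2) ((δ * x) ^ 2)
        + x ^ r * s.indicator (fun _ => (1:ℝ)) ω := by
    intro ω
    by_cases hcase : δ * x ≤ |X ω|
    · have hind : s.indicator (fun _ => (1:ℝ)) ω = 1 := Set.indicator_of_mem (show ω ∈ s from hcase) _
      have h1 : min (|X ω| ^ r) (x ^ r) ≤ x ^ r := min_le_right _ _
      have h2 : (0:ℝ) ≤ δ ^ (r - 2) * x ^ (r - 2) * min ((X ω) ^ 2) ((δ * x) ^ 2) :=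
        mul_nonneg (mul_nonneg (Real.rpow_nonneg hδ.le _) (Real.rpow_nonneg hx.le _))
          (le_min (sq_nonneg _) (sq_nonneg _))
      rw [hind]
      linarith
    · push_neg at hcase
      have hind : s.indicator (fun _ => (1:ℝ)) ω = 0 := Set.indicator_of_notMem (show ω ∉ s from not_le.mpr hcase) _
      have hmin : min ((X ω) ^ 2) ((δ * x) ^ 2) = (X ω) ^ 2 := by
        refine min_eq_left ?_
        nlinarith [sq_abs (X ω), abs_nonneg (X ω)]
      rw [hind, hmin, mul_zero, add_zero]
      by_cases hX0 : X ω = 0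
      · simp [hX0, Real.zero_rpow (by linarith : r ≠ 0)]
      · have ha : 0 < |X ω| := abs_pos.mpr hX0
        have key : |X ω| ^ r ≤ δ ^ (r - 2) * x ^ (r - 2) * (X ω) ^ 2 := by
          have h1 : |X ω| ^ r = |X ω| ^ (r - 2) * |X ω| ^ (2:ℝ) := by
            rw [← Real.rpow_add ha]; norm_num
          have h2 : |X ω| ^ (2:ℝ) = (X ω) ^ 2 := by
            rw [show ((2:ℝ)) = ((2:ℕ):ℝ) by norm_num, Real.rpow_natCast, sq_abs]
          have h3 : |X ω| ^ (r - 2) ≤ (δ * x) ^ (r - 2) :=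
            Real.rpow_le_rpow (abs_nonneg _) hcase.le hr2
          have h4 : (δ * x) ^ (r - 2) = δ ^ (r - 2) * x ^ (r - 2) :=
            Real.mul_rpow hδ.le hx.le
          rw [h1, h2]
          calc |X ω| ^ (r - 2) * (X ω) ^ 2 ≤ (δ * x) ^ (r - 2) * (X ω) ^ 2 :=
                mul_le_mul_of_nonneg_right h3 (sq_nonneg _)
            _ = δ ^ (r - 2) * x ^ (r - 2) * (X ω) ^ 2 := by rw [h4]
        exact le_trans (min_le_left _ _) key
  have hf : Integrable (fun ω => min (|X ω| ^ r) (x ^ r)) μ :=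
    integrable_min_bdd μ (hX.abs.pow_const r) (Real.rpow_nonneg hx.le r)
      (fun ω => Real.rpow_nonneg (abs_nonneg _) r)
  have hg : Integrable (fun ω => min ((X ω) ^ 2) ((δ * x) ^ 2)) μ :=
    integrable_min_bdd μ (hX.pow_const 2) (sq_nonneg _) (fun ω => sq_nonneg _)
  have hind : Integrable (s.indicator (fun _ => (1:ℝ))) μ :=
    (integrable_const 1).indicator hs
  calc ∫ ω, min (|X ω| ^ r) (x ^ r) ∂μ
      ≤ ∫ ω, (δ ^ (r - 2) * x ^ (r - 2) * min ((X ω) ^ 2) ((δ * x) ^ 2)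
          + x ^ r * s.indicator (fun _ => (1:ℝ)) ω) ∂μ :=
        integral_mono hf ((hg.const_mul _).add (hind.const_mul _)) hpt
    _ = δ ^ (r - 2) * x ^ (r - 2) * (∫ ω, min ((X ω) ^ 2) ((δ * x) ^ 2) ∂μ)
          + x ^ r * (μ s).toReal := by
        rw [integral_add (hg.const_mul _) (hind.const_mul _), integral_const_mul, integral_const_mul]
        congr 2
        exact integral_indicator_one hs

/-- `E[|X|^r ∧ x^r] ≤ δ^{r−2} x^{r−2} E[X² ∧ (δx)²] + x^r P(|X| ≥ δx)` for `r > 2`,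
`0 < δ < 1`, `x > 0`; consequently, if `x²P(|X| ≥ x) = o(l(x))` with
`l(x) = E[X² ∧ x²]` slowly varying, then `E[|X|^r ∧ x^r] = o(x^{r−2} l(x))`. -/
theorem truncated_r_moment_bound
    {Ω : Type*} [MeasurableSpace Ω] (μ : Measure Ω) [IsProbabilityMeasure μ]
    (X : Ω → ℝ) (hX : Measurable X) (r : ℝ) (hr : 2 < r)
    (l : ℝ → ℝ) (hl : ∀ x, l x = ∫ ω, min ((X ω) ^ 2) (x ^ 2) ∂μ) :
    (∀ δ x : ℝ, 0 < δ → δ < 1 → 0 < x →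
      ∫ ω, min (|X ω| ^ r) (x ^ r) ∂μ ≤
        δ ^ (r - 2) * x ^ (r - 2) * (∫ ω, min ((X ω) ^ 2) ((δ * x) ^ 2) ∂μ) +
          x ^ r * (μ {ω | δ * x ≤ |X ω|}).toReal) ∧
    ((fun x => x ^ 2 * (μ {ω | x ≤ |X ω|}).toReal) =o[atTop] l →
      (∀ᶠ x in atTop, 0 < l x) →
      (∀ k : ℝ, 0 < k → Tendsto (fun x => l (k * x) / l x) atTop (nhds 1)) →
      (fun x => ∫ ω, min (|X ω| ^ r) (x ^ r) ∂μ) =o[atTop]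
        (fun x => x ^ (r - 2) * l x)) := by
  have hr2 : (0:ℝ) < r - 2 := by linarith
  have lnn : ∀ y : ℝ, 0 ≤ l y := by
    intro y
    rw [hl y]
    exact integral_nonneg fun ω => le_min (sq_nonneg _) (sq_nonneg _)
  refine ⟨fun δ x hδ hδ1 hx => part_one μ X hX r hr δ x hδ hδ1 hx, ?_⟩
  intro h hpos hslow
  rw [isLittleO_iff]
  intro ε hε
  -- choose δ
  set δ : ℝ := min (1/2) ((ε/4) ^ (r - 2)⁻¹) with hδ_def
  have hδpos : 0 < δ :=
    lt_min (by norm_num) (Real.rpow_pos_of_pos (by linarith) _)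
  have hδ1 : δ < 1 := lt_of_le_of_lt (min_le_left _ _) (by norm_num)
  have hδr : δ ^ (r - 2) ≤ ε / 4 := by
    calc δ ^ (r - 2) ≤ ((ε/4) ^ (r - 2)⁻¹) ^ (r - 2) :=
          Real.rpow_le_rpow hδpos.le (min_le_right _ _) hr2.le
      _ = ε / 4 := Real.rpow_inv_rpow (by linarith) (ne_of_gt hr2)
  have hc : (0:ℝ) < ε * δ ^ 2 / 4 := by positivity
  have E3 : ∀ᶠ x in atTop,
      (δ * x) ^ 2 * (μ {ω | δ * x ≤ |X ω|}).toReal ≤ ε * δ ^ 2 / 4 * l (δ * x) := by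
    have := (isLittleO_iff.mp h hc)
    have htend : Tendsto (fun x : ℝ => δ * x) atTop atTop :=
      Tendsto.const_mul_atTop hδpos tendsto_id
    filter_upwards [htend.eventually this] with x hx
    rw [Real.norm_eq_abs, Real.norm_eq_abs, abs_of_nonneg (lnn _),
      abs_of_nonneg (mul_nonneg (sq_nonneg _) ENNReal.toReal_nonneg)] at hx
    exact hx
  have E2 : ∀ᶠ x in atTop, l (δ * x) / l x < 2 :=
    (hslow δ hδpos).eventually_lt_const (by norm_num)
  filter_upwards [E3, E2, hpos, eventually_gt_atTop (0:ℝ)] with x h3 h2 hlx hx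
  have hA : (0:ℝ) < x ^ (r - 2) := Real.rpow_pos_of_pos hx _
  have hL : l (δ * x) ≤ 2 * l x := by
    have := h2.le
    rw [div_le_iff₀ hlx] at this
    linarith
  have hfnn : 0 ≤ ∫ ω, min (|X ω| ^ r) (x ^ r) ∂μ :=
    integral_nonneg fun ω =>
      le_min (Real.rpow_nonneg (abs_nonneg _) r) (Real.rpow_nonneg hx.le r)
  have hxr : x ^ r = x ^ (r - 2) * x ^ (2:ℕ) := by
    rw [← Real.rpow_natCast x 2, ← Real.rpow_add hx]
    norm_num
  have hPnn : (0:ℝ) ≤ (μ {ω | δ * x ≤ |X ω|}).toReal := ENNReal.toReal_nonneg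
  have hmain : ∫ ω, min (|X ω| ^ r) (x ^ r) ∂μ ≤
      δ ^ (r - 2) * x ^ (r - 2) * l (δ * x) +
        x ^ r * (μ {ω | δ * x ≤ |X ω|}).toReal := by
    have := part_one μ X hX r hr δ x hδpos hδ1 hx
    rwa [← hl (δ * x)] at this
  -- second term bound
  have hsecond : x ^ r * (μ {ω | δ * x ≤ |X ω|}).toReal ≤
      ε / 4 * (x ^ (r - 2) * l (δ * x)) := by
    have hexp : (δ * x) ^ 2 = δ ^ 2 * x ^ 2 := mul_pow δ x 2
    rw [hexp] at h3
    have hδ2 : (0:ℝ) < δ ^ 2 := by positivity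
    rw [hxr]
    have hx2P : x ^ (2:ℕ) * (μ {ω | δ * x ≤ |X ω|}).toReal ≤ ε / 4 * l (δ * x) := by
      have : δ ^ 2 * (x ^ 2 * (μ {ω | δ * x ≤ |X ω|}).toReal) ≤
          δ ^ 2 * (ε / 4 * l (δ * x)) := by
        calc δ ^ 2 * (x ^ 2 * (μ {ω | δ * x ≤ |X ω|}).toReal)
            = δ ^ 2 * x ^ 2 * (μ {ω | δ * x ≤ |X ω|}).toReal := by ring
          _ ≤ ε * δ ^ 2 / 4 * l (δ * x) := h3
          _ = δ ^ 2 * (ε / 4 * l (δ * x)) := by ring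
      exact le_of_mul_le_mul_left this hδ2
    calc x ^ (r - 2) * x ^ (2:ℕ) * (μ {ω | δ * x ≤ |X ω|}).toReal
        = x ^ (r - 2) * (x ^ (2:ℕ) * (μ {ω | δ * x ≤ |X ω|}).toReal) := by ring
      _ ≤ x ^ (r - 2) * (ε / 4 * l (δ * x)) := by
          exact mul_le_mul_of_nonneg_left hx2P hA.le
      _ = ε / 4 * (x ^ (r - 2) * l (δ * x)) := by ring
  have hfirst : δ ^ (r - 2) * x ^ (r - 2) * l (δ * x) ≤
      ε / 4 * (x ^ (r - 2) * l (δ * x)) := by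
    have hLnn : 0 ≤ x ^ (r - 2) * l (δ * x) := mul_nonneg hA.le (lnn _)
    calc δ ^ (r - 2) * x ^ (r - 2) * l (δ * x)
        = δ ^ (r - 2) * (x ^ (r - 2) * l (δ * x)) := by ring
      _ ≤ ε / 4 * (x ^ (r - 2) * l (δ * x)) := mul_le_mul_of_nonneg_right hδr hLnn
  have htot : ∫ ω, min (|X ω| ^ r) (x ^ r) ∂μ ≤ ε * (x ^ (r - 2) * l x) := by
    have hstep : ∫ ω, min (|X ω| ^ r) (x ^ r) ∂μ ≤
        ε / 2 * (x ^ (r - 2) * l (δ * x)) := by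
      calc ∫ ω, min (|X ω| ^ r) (x ^ r) ∂μ
          ≤ δ ^ (r - 2) * x ^ (r - 2) * l (δ * x) +
            x ^ r * (μ {ω | δ * x ≤ |X ω|}).toReal := hmain
        _ ≤ ε / 4 * (x ^ (r - 2) * l (δ * x)) + ε / 4 * (x ^ (r - 2) * l (δ * x)) :=
            add_le_add hfirst hsecond
        _ = ε / 2 * (x ^ (r - 2) * l (δ * x)) := by ring
    calc ∫ ω, min (|X ω| ^ r) (x ^ r) ∂μ
        ≤ ε / 2 * (x ^ (r - 2) * l (δ * x)) := hstep
      _ ≤ ε / 2 * (x ^ (r - 2) * (2 * l x)) := by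
          refine mul_le_mul_of_nonneg_left ?_ (by linarith)
          exact mul_le_mul_of_nonneg_left hL hA.le
      _ = ε * (x ^ (r - 2) * l x) := by ring
  rw [Real.norm_eq_abs, Real.norm_eq_abs, abs_of_nonneg hfnn,
    abs_of_nonneg (mul_nonneg hA.le (lnn x))]
  exact htot
end

section
/- Let Y be a nonnegative real random variable on a probability space with E[Y] < ∞. Then for any b ≥ 0: E[(Y − b)⁺] = ∫_b^∞ P(Y ≥ y) dy. In particular, if x²·P(Y ≥ x) = o(l(x)) as x → ∞ with l slowly varying and positive for large x, then E[(Y − x)⁺] = o(l(x)/x) as x → ∞. -/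
open MeasureTheory Filter Asymptotics

/-- For a nonnegative integrable random variable `Y`:
`E[(Y − b)⁺] = ∫_b^∞ P(Y ≥ y) dy`; in particular, if `x²P(Y ≥ x) = o(l(x))` with `l`
slowly varying and eventually positive, then `E[(Y − x)⁺] = o(l(x)/x)` as `x → ∞`. -/
theorem expectation_positive_part_tail_integral
    {Ω : Type*} [MeasurableSpace Ω] (μ : Measure Ω) [IsProbabilityMeasure μ]
    (Y : Ω → ℝ) (hY : Measurable Y) (hY0 : ∀ ω, 0 ≤ Y ω)
    (hint : Integrable Y μ) :
    (∀ b : ℝ, 0 ≤ b →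
      ∫ ω, max (Y ω - b) 0 ∂μ = ∫ y in Set.Ioi b, (μ {ω | y ≤ Y ω}).toReal) ∧
    (∀ l : ℝ → ℝ,
      (fun x => x ^ 2 * (μ {ω | x ≤ Y ω}).toReal) =o[atTop] l →
      (∀ᶠ x in atTop, 0 < l x) →
      (∀ k : ℝ, 0 < k → Tendsto (fun x => l (k * x) / l x) atTop (nhds 1)) →
      (fun x => ∫ ω, max (Y ω - x) 0 ∂μ) =o[atTop] (fun x => l x / x)) := by
  -- integrability of the positive parts
  have hYm : ∀ c : ℝ, Integrable (fun ω => max (Y ω - c) 0) μ := by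
    intro c
    refine Integrable.mono' (hint.add (integrable_const |c|))
      ((hY.sub measurable_const).max measurable_const).aestronglyMeasurable
      (Eventually.of_forall fun ω => ?_)
    rw [Real.norm_eq_abs, abs_of_nonneg (le_max_right _ _)]
    have h1 : Y ω - c ≤ Y ω + |c| := by
      have := neg_abs_le c; linarith
    have h0 : (0:ℝ) ≤ Y ω + |c| := by
      have := hY0 ω; have := abs_nonneg c; linarith
    exact max_le h1 h0
  constructor
  · -- Part 1: layer cake formula
    intro b hb
    rw [(hYm b).integral_eq_integral_meas_le
      (Eventually.of_forall fun ω => le_max_right _ _)]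
    have h1 : Set.EqOn (fun t => (μ {a | t ≤ max (Y a - b) 0}).toReal)
        (fun t => (μ {ω | t + b ≤ Y ω}).toReal) (Set.Ioi 0) := by
      intro t ht
      have ht' : (0:ℝ) < t := ht
      simp only
      congr 1
      apply congrArg
      ext a
      simp only [Set.mem_setOf_eq, le_max_iff]
      constructor
      · rintro (h | h)
        · linarith
        · linarith
      · intro h; left; linarith
    simp only [measureReal_def]
    rw [setIntegral_congr_fun measurableSet_Ioi h1]
    -- change of variables y = t + b
    set g : ℝ → ℝ := fun y => (μ {ω | y ≤ Y ω}).toReal with hg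
    have key : ∀ t : ℝ, (Set.Ioi (0:ℝ)).indicator (fun t => g (t + b)) t
        = (Set.Ioi b).indicator g (t + b) := by
      intro t
      simp only [Set.indicator_apply, Set.mem_Ioi, lt_add_iff_pos_left]
    calc ∫ t in Set.Ioi (0:ℝ), g (t + b)
        = ∫ t, (Set.Ioi (0:ℝ)).indicator (fun t => g (t + b)) t :=
          (integral_indicator measurableSet_Ioi).symm
      _ = ∫ t, (Set.Ioi b).indicator g (t + b) := by simp_rw [key]
      _ = ∫ y, (Set.Ioi b).indicator g y := integral_add_right_eq_self _ b
      _ = ∫ y in Set.Ioi b, g y := integral_indicator measurableSet_Ioi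
  · -- Part 2
    intro l ho hlpos hslow
    rw [isLittleO_iff]
    intro ε hε
    have hε8 : (0:ℝ) < ε / 8 := by linarith
    have h2 : ∀ᶠ x in atTop, l (2 * x) ≤ 3 / 2 * l x := by
      have h := (hslow 2 two_pos).eventually (eventually_le_nhds
        (show (1:ℝ) < 3 / 2 by norm_num))
      filter_upwards [h, hlpos] with x hx hl
      have := (div_le_iff₀ hl).mp hx
      linarith
    have hbd : ∀ᶠ x in atTop, x ^ 2 * (μ {ω | x ≤ Y ω}).toReal ≤ ε / 8 * l x := by
      filter_upwards [ho.def hε8, hlpos] with x hx hl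
      rw [Real.norm_eq_abs, Real.norm_eq_abs, abs_of_pos hl] at hx
      exact (le_abs_self _).trans hx
    obtain ⟨X, hX⟩ := eventually_atTop.mp
      ((hbd.and (h2.and hlpos)).and (eventually_ge_atTop 1))
    filter_upwards [eventually_ge_atTop X] with x hx
    obtain ⟨⟨hbdx, h2x, hlx⟩, hx1⟩ := hX x hx
    have hx0 : (0:ℝ) < x := lt_of_lt_of_le one_pos hx1
    -- key growth bound for l at dyadic points
    have hge : ∀ k : ℕ, X ≤ 2 ^ k * x := by
      intro k
      have h1 : (1:ℝ) ≤ 2 ^ k := one_le_pow₀ one_le_two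
      nlinarith
    have h2k : ∀ k : ℕ, l (2 ^ k * x) ≤ (3 / 2) ^ k * l x := by
      intro k
      induction k with
      | zero => simp
      | succ k ih =>
        have hk := (hX _ (hge k)).1.2.1
        have harg : (2:ℝ) ^ (k + 1) * x = 2 * (2 ^ k * x) := by ring
        rw [harg]
        calc l (2 * (2 ^ k * x)) ≤ 3 / 2 * l (2 ^ k * x) := hk
          _ ≤ 3 / 2 * ((3 / 2) ^ k * l x) := by linarith
          _ = (3 / 2) ^ (k + 1) * l x := by ring
    -- tail probability bound at dyadic points
    have htail : ∀ k : ℕ, (μ {ω | 2 ^ k * x < Y ω}).toReal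
        ≤ ε / 8 * l (2 ^ k * x) / (2 ^ k * x) ^ 2 := by
      intro k
      have hc : (0:ℝ) < 2 ^ k * x := by positivity
      have hmono : (μ {ω | 2 ^ k * x < Y ω}).toReal ≤ (μ {ω | 2 ^ k * x ≤ Y ω}).toReal :=
        ENNReal.toReal_mono (measure_ne_top μ _) (measure_mono (Set.setOf_subset_setOf.mpr fun ω h => le_of_lt h))
      have hb := (hX _ (hge k)).1.1
      rw [le_div_iff₀ (by positivity)]
      calc (μ {ω | 2 ^ k * x < Y ω}).toReal * (2 ^ k * x) ^ 2
          = (2 ^ k * x) ^ 2 * (μ {ω | 2 ^ k * x < Y ω}).toReal := by ring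
        _ ≤ (2 ^ k * x) ^ 2 * (μ {ω | 2 ^ k * x ≤ Y ω}).toReal := by
            have : (0:ℝ) ≤ (2 ^ k * x) ^ 2 := by positivity
            exact mul_le_mul_of_nonneg_left hmono this
        _ ≤ ε / 8 * l (2 ^ k * x) := hb
    -- per-term bound
    have hterm : ∀ k : ℕ, 2 ^ (k + 1) * x * (μ {ω | 2 ^ k * x < Y ω}).toReal
        ≤ ε / 4 * (l x / x) * (3 / 4) ^ k := by
      intro k
      have hc : (0:ℝ) < 2 ^ k * x := by positivity
      have h1 : 2 ^ (k + 1) * x * (μ {ω | 2 ^ k * x < Y ω}).toReal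
          ≤ 2 ^ (k + 1) * x * (ε / 8 * l (2 ^ k * x) / (2 ^ k * x) ^ 2) := by
        have : (0:ℝ) ≤ 2 ^ (k + 1) * x := by positivity
        exact mul_le_mul_of_nonneg_left (htail k) this
      have h2' : 2 ^ (k + 1) * x * (ε / 8 * l (2 ^ k * x) / (2 ^ k * x) ^ 2)
          = ε / 4 * (l (2 ^ k * x) / (2 ^ k * x)) := by
        field_simp
        ring
      have h3 : l (2 ^ k * x) / (2 ^ k * x) ≤ ((3 / 2) ^ k * l x) / (2 ^ k * x) := by
        gcongr
        exact h2k k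
      have h4 : ((3 / 2) ^ k * l x) / (2 ^ k * x) = (l x / x) * (3 / 4) ^ k := by
        rw [← div_mul_div_comm, ← div_pow]
        norm_num [mul_comm]
      calc 2 ^ (k + 1) * x * (μ {ω | 2 ^ k * x < Y ω}).toReal
          ≤ 2 ^ (k + 1) * x * (ε / 8 * l (2 ^ k * x) / (2 ^ k * x) ^ 2) := h1
        _ = ε / 4 * (l (2 ^ k * x) / (2 ^ k * x)) := h2'
        _ ≤ ε / 4 * (((3 / 2) ^ k * l x) / (2 ^ k * x)) := by
            have : (0:ℝ) ≤ ε / 4 := by linarith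
            exact mul_le_mul_of_nonneg_left h3 this
        _ = ε / 4 * (l x / x) * (3 / 4) ^ k := by rw [h4]; ring
    -- sum bound
    have hlxx : (0:ℝ) ≤ l x / x := le_of_lt (div_pos hlx hx0)
    have hsum : ∀ n : ℕ, ∑ k ∈ Finset.range n,
        2 ^ (k + 1) * x * (μ {ω | 2 ^ k * x < Y ω}).toReal ≤ ε * (l x / x) := by
      intro n
      have hgeo : ∑ k ∈ Finset.range n, ((3:ℝ) / 4) ^ k ≤ 4 := by
        have hsummable : Summable (fun k : ℕ => ((3:ℝ) / 4) ^ k) :=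
          summable_geometric_of_lt_one (by norm_num) (by norm_num)
        have := Summable.sum_le_tsum (Finset.range n)
          (fun k _ => by positivity) hsummable
        rw [tsum_geometric_of_lt_one (by norm_num) (by norm_num)] at this
        norm_num at this
        linarith
      calc ∑ k ∈ Finset.range n, 2 ^ (k + 1) * x * (μ {ω | 2 ^ k * x < Y ω}).toReal
          ≤ ∑ k ∈ Finset.range n, ε / 4 * (l x / x) * (3 / 4) ^ k :=
            Finset.sum_le_sum fun k _ => hterm k
        _ = ε / 4 * (l x / x) * ∑ k ∈ Finset.range n, (3 / 4) ^ k := by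
            rw [Finset.mul_sum]
        _ ≤ ε / 4 * (l x / x) * 4 := by
            have : (0:ℝ) ≤ ε / 4 * (l x / x) := by positivity
            exact mul_le_mul_of_nonneg_left hgeo this
        _ = ε * (l x / x) := by ring
    -- pointwise dyadic decomposition
    have hpt : ∀ n : ℕ, ∀ ω, max (Y ω - x) 0
        ≤ (∑ k ∈ Finset.range n,
            2 ^ (k + 1) * x * Set.indicator {ω' | 2 ^ k * x < Y ω'} 1 ω)
          + max (Y ω - 2 ^ n * x) 0 := by
      intro n ω
      induction n with
      | zero => simp
      | succ n ih =>
        rw [Finset.sum_range_succ]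
        have hstep : max (Y ω - 2 ^ n * x) 0
            ≤ 2 ^ (n + 1) * x * Set.indicator {ω' | 2 ^ n * x < Y ω'} 1 ω
              + max (Y ω - 2 ^ (n + 1) * x) 0 := by
          by_cases h : 2 ^ n * x < Y ω
          · rw [Set.indicator_of_mem (show ω ∈ {ω' | 2 ^ n * x < Y ω'} from h)]
            simp only [Pi.one_apply, mul_one]
            have hm : Y ω - 2 ^ (n + 1) * x ≤ max (Y ω - 2 ^ (n + 1) * x) 0 :=
              le_max_left _ _
            have hp : (0:ℝ) ≤ 2 ^ n * x := by positivity
            refine max_le ?_ (by positivity)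
            have : (2:ℝ) ^ (n + 1) * x = 2 * (2 ^ n * x) := by ring
            nlinarith [le_max_right (Y ω - 2 ^ (n + 1) * x) (0:ℝ)]
          · rw [Set.indicator_of_notMem (show ω ∉ {ω' | 2 ^ n * x < Y ω'} from h)]
            push_neg at h
            have hle : Y ω - 2 ^ n * x ≤ 0 := by
              have : (0:ℝ) ≤ 2 ^ n * x := by positivity
              linarith
            rw [max_eq_right hle]
            positivity
        linarith
    -- integrability of indicator terms
    have hind : ∀ k : ℕ, Integrable
        (fun ω => 2 ^ (k + 1) * x * Set.indicator {ω' | 2 ^ k * x < Y ω'} 1 ω) μ := by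
      intro k
      have hms : MeasurableSet {ω' | 2 ^ k * x < Y ω'} :=
        measurableSet_lt measurable_const hY
      exact ((integrable_const (1:ℝ)).indicator hms).const_mul _
    -- integrated inequality
    have hintineq : ∀ n : ℕ, ∫ ω, max (Y ω - x) 0 ∂μ
        ≤ ε * (l x / x) + ∫ ω, max (Y ω - 2 ^ n * x) 0 ∂μ := by
      intro n
      have hI : Integrable (fun ω => (∑ k ∈ Finset.range n,
          2 ^ (k + 1) * x * Set.indicator {ω' | 2 ^ k * x < Y ω'} 1 ω)
          + max (Y ω - 2 ^ n * x) 0) μ := by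
        exact (integrable_finset_sum _ fun k _ => hind k).add (hYm _)
      have h1 := integral_mono (hYm x) hI (fun ω => hpt n ω)
      rw [integral_add (integrable_finset_sum _ fun k _ => hind k) (hYm _),
        integral_finset_sum _ (fun k _ => hind k)] at h1
      have h2 : ∀ k ∈ Finset.range n, ∫ ω, 2 ^ (k + 1) * x *
          Set.indicator {ω' | 2 ^ k * x < Y ω'} 1 ω ∂μ
          = 2 ^ (k + 1) * x * (μ {ω' | 2 ^ k * x < Y ω'}).toReal := by
        intro k _
        rw [integral_const_mul, integral_indicator_one
          (measurableSet_lt measurable_const hY), measureReal_def]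
      rw [Finset.sum_congr rfl h2] at h1
      have := hsum n
      linarith
    -- tail goes to zero
    have htend : Tendsto (fun n : ℕ => ∫ ω, max (Y ω - 2 ^ n * x) 0 ∂μ)
        atTop (nhds 0) := by
      have h := tendsto_integral_of_dominated_convergence
        (F := fun (n : ℕ) ω => max (Y ω - 2 ^ n * x) 0) (f := fun _ => (0:ℝ))
        (fun ω => Y ω)
        (fun n => (((hY.sub measurable_const).max measurable_const).aestronglyMeasurable))
        hint ?_ ?_
      · simpa using h
      · intro n
        refine Eventually.of_forall fun ω => ?_
        rw [Real.norm_eq_abs, abs_of_nonneg (le_max_right _ _)]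
        have : (0:ℝ) ≤ 2 ^ n * x := by positivity
        exact max_le (by linarith [hY0 ω]) (hY0 ω)
      · refine Eventually.of_forall fun ω => ?_
        have hev : ∀ᶠ n : ℕ in atTop, Y ω ≤ 2 ^ n * x := by
          have hpow := (tendsto_pow_atTop_atTop_of_one_lt
            (show (1:ℝ) < 2 by norm_num)).eventually_ge_atTop (Y ω)
          filter_upwards [hpow] with n hn
          calc Y ω ≤ 2 ^ n := hn
            _ ≤ 2 ^ n * x := le_mul_of_one_le_right (by positivity) hx1
        have heq : (fun n : ℕ => max (Y ω - 2 ^ n * x) 0) =ᶠ[atTop] fun _ => (0:ℝ) := by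
          filter_upwards [hev] with n hn
          exact max_eq_right (by linarith)
        exact Tendsto.congr' heq.symm tendsto_const_nhds
    -- conclude
    have hfinal : ∫ ω, max (Y ω - x) 0 ∂μ ≤ ε * (l x / x) := by
      have hlim := htend.const_add (ε * (l x / x))
      rw [add_zero] at hlim
      exact ge_of_tendsto' hlim hintineq
    have hnn : 0 ≤ ∫ ω, max (Y ω - x) 0 ∂μ :=
      integral_nonneg fun ω => le_max_right _ _
    rw [Real.norm_eq_abs, Real.norm_eq_abs, abs_of_nonneg hnn,
      abs_of_pos (div_pos hlx hx0)]
    exact hfinal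
end
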